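/- arXiv:2302.02072 — 6 statements merged into one kernel-verified Lean document; each statement's English description precedes it below -/
import Mathlib

section
/- Let X be a reflexive real Banach space, H a real Hilbert space, and let f : X × H → ℝ∪{±∞} be weakly lower semicontinuous and weakly level-compact. Then the perturbation function β : H → ℝ∪{±∞} defined by β(z) := inf_{x∈X} f(x,z) is sequentially weakly lower semicontinuous: whenever z_n ⇀ z weakly in H, β(z) ≤ liminf_{n→∞} β(z_n). -/
open Filter Topology Bornology

noncomputable section

/-- A real normed space is *reflexive* if the canonical embedding into its double dual is
surjective. -/
def IsReflexiveSpace (X : Type*) [NormedAddCommGroup X] [NormedSpace ℝ X] : Prop :=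
  Function.Surjective ⇑(NormedSpace.inclusionInDoubleDual ℝ X)

/-- A set is *weakly compact* if it is compact in the weak topology. -/
def WCompact {X : Type*} [NormedAddCommGroup X] [NormedSpace ℝ X] (S : Set X) : Prop :=
  IsCompact (show Set (WeakSpace ℝ X) from S)

/-- A set is *weakly open* if it is open in the weak topology. -/
def WOpen {X : Type*} [NormedAddCommGroup X] [NormedSpace ℝ X] (S : Set X) : Prop :=
  IsOpen (show Set (WeakSpace ℝ X) from S)

/-- A set of pairs is *weakly compact* if it is compact in the product of the weak
topologies. -/
def WCompact2 {X H : Type*} [NormedAddCommGroup X] [NormedSpace ℝ X]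
    [NormedAddCommGroup H] [NormedSpace ℝ H] (S : Set (X × H)) : Prop :=
  IsCompact (show Set (WeakSpace ℝ X × WeakSpace ℝ H) from S)

/-- *Weak lower semicontinuity* of an extended-real-valued function. -/
def WLsc {X : Type*} [NormedAddCommGroup X] [NormedSpace ℝ X] (g : X → EReal) : Prop :=
  LowerSemicontinuous (show WeakSpace ℝ X → EReal from g)

/-- Weak lower semicontinuity of a function of two variables, w.r.t. the product of the
weak topologies. -/
def WLsc2 {X H : Type*} [NormedAddCommGroup X] [NormedSpace ℝ X]
    [NormedAddCommGroup H] [NormedSpace ℝ H] (g : X × H → EReal) : Prop :=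
  LowerSemicontinuous (show WeakSpace ℝ X × WeakSpace ℝ H → EReal from g)

/-- Weak upper semicontinuity of a real-valued function. -/
def WUsc {X : Type*} [NormedAddCommGroup X] [NormedSpace ℝ X] (g : X → ℝ) : Prop :=
  UpperSemicontinuous (show WeakSpace ℝ X → ℝ from g)

/-- Weak (sequential) convergence of a sequence: `L (u n) → L l` for every continuous
linear functional `L`. -/
def WSeqConv {X : Type*} [NormedAddCommGroup X] [NormedSpace ℝ X] (u : ℕ → X) (l : X) : Prop :=
  ∀ L : StrongDual ℝ X, Tendsto (fun n => L (u n)) atTop (𝓝 (L l))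

/-- Weak level-compactness of a dualizing parameterization `f`. -/
def WLevelCompact {X H : Type*} [NormedAddCommGroup X] [NormedSpace ℝ X]
    [NormedAddCommGroup H] [NormedSpace ℝ H] (f : X → H → EReal) : Prop :=
  ∀ (z₀ : H) (α : ℝ), ∃ U : Set H, WOpen U ∧ z₀ ∈ U ∧
    ∃ B : Set X, WCompact B ∧ ∀ z ∈ U, {x : X | f x z ≤ (α : EReal)} ⊆ B

section Lagrangian

variable {X H : Type*} [NormedAddCommGroup H] [InnerProductSpace ℝ H]

/-- The augmented Lagrangian integrand `(x,z) ↦ f(x,z) − ⟨A z, y⟩ + c σ(z)`. -/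
def lagr (f : X → H → EReal) (σ : H → EReal) (A : H → H) (y : H) (c : ℝ) (x : X) (z : H) :
    EReal :=
  f x z - ((inner ℝ (A z) y : ℝ) : EReal) + (c : EReal) * σ z

/-- The dual function `q(y,c) = inf_{x,z} (f(x,z) − ⟨A z, y⟩ + c σ(z))`. -/
def dualq (f : X → H → EReal) (σ : H → EReal) (A : H → H) (y : H) (c : ℝ) : EReal :=
  ⨅ (x : X) (z : H), lagr f σ A y c x z

/-- The dual optimal value `M_D = sup_{(y,c) ∈ H × ℝ₊} q(y,c)`. -/
def MD (f : X → H → EReal) (σ : H → EReal) (A : H → H) : EReal :=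
  ⨆ (y : H) (c : ℝ) (_ : 0 ≤ c), dualq f σ A y c

/-- `(y,c)` is a solution of the dual problem. -/
def DualSol (f : X → H → EReal) (σ : H → EReal) (A : H → H) (y : H) (c : ℝ) : Prop :=
  0 ≤ c ∧ ∀ (y' : H) (c' : ℝ), 0 ≤ c' → dualq f σ A y' c' ≤ dualq f σ A y c

/-- The function `γ_n(z) = β(z) − ⟨A z, ȳ⟩ + n σ(z)`, where `β(z) = inf_x f(x,z)`. -/
def gam (f : X → H → EReal) (σ : H → EReal) (A : H → H) (ybar : H) (n : ℕ) (z : H) : EReal :=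
  (⨅ x : X, f x z) - ((inner ℝ (A z) ybar : ℝ) : EReal) + (n : EReal) * σ z

end Lagrangian

/-- The primal optimal value `M_P = inf_x φ(x)`. -/
def MP {X : Type*} (φ : X → EReal) : EReal := ⨅ x, φ x

/-- If `f` is weakly lsc and weakly level-compact, then the perturbation
function `β(z) = inf_x f(x,z)` is sequentially weakly lower semicontinuous. -/
theorem perturbation_seq_weakly_lsc
    {X H : Type*} [NormedAddCommGroup X] [NormedSpace ℝ X] [CompleteSpace X]
    [NormedAddCommGroup H] [InnerProductSpace ℝ H] [CompleteSpace H]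
    (hrefl : IsReflexiveSpace X) (f : X → H → EReal)
    (hflsc : WLsc2 fun p : X × H => f p.1 p.2)
    (hflev : WLevelCompact f)
    (zseq : ℕ → H) (l : H) (hconv : WSeqConv zseq l) :
    (⨅ x, f x l) ≤ Filter.liminf (fun n => ⨅ x, f x (zseq n)) atTop := by
  by_cases hX : IsEmpty X
  · simp only [iInf_of_empty]
    simp [Filter.liminf_const]
  rw [not_isEmpty_iff] at hX
  by_contra hlt
  push_neg at hlt
  obtain ⟨α, hα1, hα2⟩ := EReal.exists_between_coe_real hlt
  obtain ⟨U, hUopen, hlU, B, hBcomp, hB⟩ := hflev l α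
  set lW : WeakSpace ℝ H := l with hlW
  set zW : ℕ → WeakSpace ℝ H := zseq with hzW
  set UW : Set (WeakSpace ℝ H) := U with hUW
  have hUWopen : IsOpen UW := hUopen
  -- weak convergence in the weak topology
  have hconv' : Tendsto zW atTop (𝓝 lW) := by
    refine (WeakBilin.tendsto_iff_forall_eval_tendsto (topDualPairing ℝ H).flip (fun x y hxy => by
      apply (NormedSpace.eq_iff_forall_dual_eq ℝ).2
      intro g
      exact LinearMap.congr_fun hxy g)).2 ?_
    intro y
    exact hconv y
  have hUmem : ∀ᶠ n in atTop, zseq n ∈ U :=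
    hconv'.eventually (hUWopen.mem_nhds hlU)
  -- frequently β (zseq n) < α
  have hfreq : ∃ᶠ n in atTop, (⨅ x, f x (zseq n)) < (α : EReal) :=
    frequently_lt_of_liminf_lt (by isBoundedDefault) hα1
  have hfreq2 : ∃ᶠ n in atTop, zseq n ∈ U ∧ (⨅ x, f x (zseq n)) < (α : EReal) :=
    (hfreq.and_eventually hUmem).mono fun n h => ⟨h.2, h.1⟩
  classical
  -- choose minimizing points
  have hxsel : ∀ n : ℕ, ∃ x : X, (⨅ x, f x (zseq n)) < (α : EReal) → f x (zseq n) < (α : EReal) := by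
    intro n
    by_cases h : (⨅ x, f x (zseq n)) < (α : EReal)
    · obtain ⟨x, hx⟩ := iInf_lt_iff.1 h
      exact ⟨x, fun _ => hx⟩
    · exact ⟨Classical.arbitrary X, fun hc => absurd hc h⟩
  choose xs hxs using hxsel
  set xW : ℕ → WeakSpace ℝ X := xs with hxW
  set BW : Set (WeakSpace ℝ X) := B with hBW
  set S : Set ℕ := {n | zseq n ∈ U ∧ (⨅ x, f x (zseq n)) < (α : EReal)} with hS
  have hFne : (atTop ⊓ 𝓟 S).NeBot := Filter.frequently_iff_neBot.1 hfreq2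
  set F := atTop ⊓ 𝓟 S with hF
  have hFS : ∀ᶠ n in F, n ∈ S := eventually_inf_principal.2 (Eventually.of_forall fun n h => h)
  have hxB : ∀ᶠ n in F, xW n ∈ BW := hFS.mono fun n hn => hB _ hn.1 (le_of_lt (hxs n hn.2))
  have hmapB : map xW F ≤ 𝓟 BW := by
    rw [le_principal_iff, mem_map]
    exact hxB
  obtain ⟨xbar, hxbarB, hcl⟩ := hBcomp.exists_clusterPt hmapB
  -- pass to the finer filter along which xs converges to xbar
  have hGne : (F ⊓ comap xW (𝓝 xbar)).NeBot := by
    rw [← Filter.map_neBot_iff xW, Filter.push_pull]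
    exact hcl.neBot.mono (le_of_eq (inf_comm _ _))
  set G := F ⊓ comap xW (𝓝 xbar) with hG
  have hGx : Tendsto xW G (𝓝 xbar) := tendsto_iff_comap.2 inf_le_right
  have hGle : G ≤ atTop := by rw [hG, hF]; exact inf_le_left.trans inf_le_left
  have hGz : Tendsto zW G (𝓝 lW) := hconv'.mono_left hGle
  have hGpair : Tendsto (fun n => (xW n, zW n)) G (𝓝 (xbar, lW)) := hGx.prodMk_nhds hGz
  -- lower semicontinuity gives a contradiction
  have hfl : (α : EReal) < f xbar l := lt_of_lt_of_le hα2 (iInf_le _ _)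
  have hev : ∀ᶠ n in G, (α : EReal) < f (xs n) (zseq n) :=
    hGpair.eventually (hflsc (xbar, lW) (α : EReal) hfl)
  have hev2 : ∀ᶠ n in G, f (xs n) (zseq n) < (α : EReal) :=
    (hFS.filter_mono inf_le_left).mono fun n hn => hxs n hn.2
  obtain ⟨n, h1, h2⟩ := (hev.and hev2).exists
  exact absurd h1 (not_lt.2 (le_of_lt h2))
end
end

section
/- Assume (H0)–(H2), (A0), (A1), and that the augmenting function σ is conditionally coercive with σ(0)=0 and argmin σ = {0}. Suppose there exists (ȳ,c̄) ∈ H × ℝ₊ with q(ȳ,c̄) > −∞. For n ∈ ℕ define γ_n : H → ℝ∪{±∞} by γ_n(z) := β(z) − ⟨A(z),ȳ⟩ + n σ(z), where β(z) := inf_{x∈X} f(x,z). Then there exist n₀ ∈ ℕ and a sequence (v_n) ⊂ H such that: (i) γ_n(v_n) = inf_{z∈H} γ_n(z) for all n ≥ n₀; and (ii) the sequence (v_n) is bounded and converges weakly to 0. -/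
open Filter Topology Bornology

noncomputable section

/-- Minimum of a lower semicontinuous `EReal`-valued function on a compact set. -/
lemma aux_min_on_compact {β : Type*} [TopologicalSpace β] {g : β → EReal}
    (hg : LowerSemicontinuous g) {s : Set β} (hs : IsCompact s) (hne : s.Nonempty) :
    ∃ p ∈ s, ∀ q ∈ s, g p ≤ g q := by
  haveI := isCompact_iff_compactSpace.mp hs
  obtain ⟨p₀, hp₀⟩ := hne
  have hg'lsc : LowerSemicontinuous (fun p : s => g p) :=
    (LowerSemicontinuous.comp hg continuous_subtype_val :)
  set ι := {c : EReal // ∃ p : s, g (p : β) ≤ c} with hι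
  haveI : Nonempty ι := ⟨⟨⊤, ⟨⟨p₀, hp₀⟩, le_top⟩⟩⟩
  have key := IsCompact.nonempty_iInter_of_directed_nonempty_isCompact_isClosed
      (fun c : ι => {p : s | g (p : β) ≤ c.1}) ?_ ?_ ?_ ?_
  · obtain ⟨p, hp⟩ := key
    simp only [Set.mem_iInter, Set.mem_setOf_eq] at hp
    exact ⟨p, p.2, fun q hq => hp ⟨g q, ⟨⟨q, hq⟩, le_rfl⟩⟩⟩
  · rintro ⟨c₁, hc₁⟩ ⟨c₂, hc₂⟩
    rcases le_total c₁ c₂ with h | h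
    · exact ⟨⟨c₁, hc₁⟩, subset_rfl, fun p hp => le_trans hp h⟩
    · exact ⟨⟨c₂, hc₂⟩, fun p hp => le_trans hp h, subset_rfl⟩
  · rintro ⟨c, ⟨p, hp⟩⟩; exact ⟨p, hp⟩
  · intro c; exact (hg'lsc.isClosed_preimage c.1).isCompact
  · intro c; exact hg'lsc.isClosed_preimage c.1

/-- Closed balls in a real Hilbert space are weakly compact. -/
lemma wcompact_closedBall (H : Type*) [NormedAddCommGroup H] [InnerProductSpace ℝ H]
    [CompleteSpace H] (R : ℝ) : WCompact (Metric.closedBall (0 : H) R) := by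
  have hcomp := WeakDual.isCompact_closedBall (𝕜 := ℝ) (E := H) 0 R
  let T : WeakDual ℝ H → WeakSpace ℝ H := fun φ => (InnerProductSpace.toDual ℝ H).symm φ
  have hT : Continuous T := by
    apply WeakBilin.continuous_of_continuous_eval
    intro L
    have : (fun φ : WeakDual ℝ H =>
        (topDualPairing ℝ H).flip ((InnerProductSpace.toDual ℝ H).symm φ) L)
        = fun φ : WeakDual ℝ H => φ ((InnerProductSpace.toDual ℝ H).symm L) := by
      funext φ
      have h1 : (topDualPairing ℝ H).flip ((InnerProductSpace.toDual ℝ H).symm φ) L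
          = L ((InnerProductSpace.toDual ℝ H).symm φ) := rfl
      rw [h1, ← InnerProductSpace.toDual_symm_apply, real_inner_comm]
      exact InnerProductSpace.toDual_symm_apply
    rw [this]
    exact WeakDual.eval_continuous _
  have himg : Metric.closedBall (0 : H) R
      = ((T '' (⇑(WeakDual.toStrongDual (𝕜 := ℝ) (E := H)) ⁻¹' Metric.closedBall 0 R)) : Set H) := by
    ext z
    constructor
    · intro hz
      refine ⟨InnerProductSpace.toDual ℝ H z, ?_, by simp [T]⟩
      show dist (InnerProductSpace.toDual ℝ H z) 0 ≤ R
      rw [dist_zero_right]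
      rw [Metric.mem_closedBall, dist_zero_right] at hz
      simpa using hz
    · rintro ⟨φ, hφ, rfl⟩
      show ((InnerProductSpace.toDual ℝ H).symm φ : H) ∈ Metric.closedBall (0 : H) R
      show dist ((InnerProductSpace.toDual ℝ H).symm (WeakDual.toStrongDual φ)) 0 ≤ R
      rw [dist_zero_right, LinearIsometryEquiv.norm_map]
      rw [Set.mem_preimage, Metric.mem_closedBall, dist_zero_right] at hφ
      exact hφ
  have h2 := hcomp.image hT
  unfold WCompact
  rw [himg]
  exact h2

/-- `(n : EReal) * a = n • a` for `0 ≤ a`. -/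
lemma ereal_natCast_mul {a : EReal} (ha : 0 ≤ a) (n : ℕ) : (n : EReal) * a = n • a := by
  induction n with
  | zero => simp
  | succ k ih =>
    have hk : (0 : EReal) ≤ (k : EReal) := by
      rw [← EReal.coe_coe_eq_natCast]
      exact_mod_cast Nat.cast_nonneg (α := ℝ) k
    rw [succ_nsmul, ← ih, Nat.cast_succ,
      EReal.right_distrib_of_nonneg hk zero_le_one, one_mul]

lemma ereal_sub_coe_ne_bot {a : EReal} (ha : a ≠ ⊥) (r : ℝ) : a - (r : EReal) ≠ ⊥ := by
  induction a with
  | bot => exact absurd rfl ha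
  | coe a => rw [← EReal.coe_sub]; exact EReal.coe_ne_bot _
  | top => rw [EReal.top_sub_coe]; exact top_ne_bot

lemma ereal_add_coe_ne_bot {a : EReal} (ha : a ≠ ⊥) (r : ℝ) : a + (r : EReal) ≠ ⊥ := by
  have := ereal_sub_coe_ne_bot ha (-r)
  rwa [sub_eq_add_neg, EReal.coe_neg, neg_neg] at this

/-- Sum of two lower semicontinuous `EReal` functions, none taking value `⊥`. -/
lemma lsc_add_of_ne_bot {β : Type*} [TopologicalSpace β] {g h : β → EReal}
    (hg : LowerSemicontinuous g) (hh : LowerSemicontinuous h)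
    (hgb : ∀ p, g p ≠ ⊥) (hhb : ∀ p, h p ≠ ⊥) :
    LowerSemicontinuous fun p => g p + h p :=
  hg.add' hh fun p => EReal.continuousAt_add (Or.inr (hhb p)) (Or.inl (hgb p))

/-- Adding a real constant commutes with `iInf` on `EReal`. -/
lemma ereal_iInf_add_coe {ι : Sort*} [Nonempty ι] (g : ι → EReal) (s : ℝ) :
    (⨅ i, g i) + (s : EReal) = ⨅ i, (g i + (s : EReal)) := by
  apply le_antisymm
  · exact le_iInf fun i => add_le_add_left (iInf_le _ i) _
  · have h1 : (⨅ i, (g i + (s : EReal))) - (s : EReal) ≤ ⨅ i, g i :=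
      le_iInf fun i => EReal.sub_le_of_le_add (iInf_le _ i)
    exact (EReal.sub_le_iff_le_add (Or.inl (EReal.coe_ne_bot s))
      (Or.inl (EReal.coe_ne_top s))).mp h1

/-- Negation of an upper semicontinuous real function is lower semicontinuous. -/
lemma usc_neg {β : Type*} [TopologicalSpace β] {g : β → ℝ}
    (hg : UpperSemicontinuous g) : LowerSemicontinuous fun p => -g p := by
  intro x y hy
  have hy' : g x < -y := lt_neg.mp hy
  filter_upwards [hg x (-y) hy'] with w hw
  exact lt_neg.mpr hw

/-- Properties of the Lagrangian approximation `γ_n`: minimizers `v_n`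
exist for large `n`, and the sequence `(v_n)` is bounded and converges weakly to `0`. -/
theorem lagrangian_approximation_minimizers
    {X H : Type*} [NormedAddCommGroup X] [NormedSpace ℝ X] [CompleteSpace X]
    [NormedAddCommGroup H] [InnerProductSpace ℝ H] [CompleteSpace H]
    (hrefl : IsReflexiveSpace X)
    (φ : X → EReal)
    (hφproper : (∀ x, φ x ≠ ⊥) ∧ (∃ x, φ x ≠ ⊤))
    (hφwlsc : WLsc φ)
    (hφlev : ∀ α : ℝ, WCompact {x : X | φ x ≤ (α : EReal)})
    (f : X → H → EReal)
    (hdual : ∀ x, f x 0 = φ x)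
    (hfproper : (∀ x z, f x z ≠ ⊥) ∧ (∃ x z, f x z ≠ ⊤))
    (hflsc : WLsc2 fun p : X × H => f p.1 p.2)
    (hflev : WLevelCompact f)
    (σ : H → EReal)
    (hσpos : ∀ z, 0 ≤ σ z)
    (hσ0 : σ 0 = 0)
    (hσargmin : ∀ z, σ z = 0 → z = 0)
    (hσwlsc : WLsc σ)
    (A : H → H)
    (hA0 : ∀ z, (‖A z‖ : EReal) ≤ σ z)
    (hA1 : ∀ y : H, WUsc fun z => (inner ℝ (A z) y : ℝ))
    (Kσ : ℝ) (hKσpos : 0 < Kσ) (hσcc : IsBounded {z : H | σ z ≤ (Kσ : EReal)})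
    (ybar : H) (cbar : ℝ) (hcbar : 0 ≤ cbar) (hqbar : dualq f σ A ybar cbar ≠ ⊥) :
    ∃ (n₀ : ℕ) (v : ℕ → H),
      (∀ n, n₀ ≤ n → gam f σ A ybar n (v n) = ⨅ z : H, gam f σ A ybar n z) ∧
      (∃ M : ℝ, ∀ n, ‖v n‖ ≤ M) ∧ WSeqConv v 0 := by
  classical
  obtain ⟨hfnb, -⟩ := hfproper
  obtain ⟨hφnb, x₀, hx₀⟩ := hφproper
  haveI : Nonempty X := ⟨x₀⟩
  have hbot0 : (⊥ : EReal) < 0 := EReal.coe_zero ▸ EReal.bot_lt_coe 0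
  have hσnb : ∀ z : H, σ z ≠ ⊥ := fun z => (hbot0.trans_le (hσpos z)).ne'
  -- `A 0 = 0`
  have hA00 : A 0 = 0 := by
    have h1 : (‖A 0‖ : EReal) ≤ ((0 : ℝ) : EReal) := by
      rw [EReal.coe_zero, ← hσ0]; exact hA0 0
    exact norm_le_zero_iff.mp (by exact_mod_cast h1)
  -- minimizer of φ
  have hφmin : ∃ xs : X, ∀ x : X, φ xs ≤ φ x := by
    have hx₀b : φ x₀ ≠ ⊥ := hφnb x₀
    set α₀ := (φ x₀).toReal with hα₀
    have hφx₀ : φ x₀ = (α₀ : EReal) := (EReal.coe_toReal hx₀ hx₀b).symm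
    obtain ⟨xs, hxs_mem, hxs⟩ := aux_min_on_compact hφwlsc (hφlev α₀)
      ⟨x₀, show φ x₀ ≤ (α₀ : EReal) from hφx₀.le⟩
    refine ⟨xs, fun x => ?_⟩
    by_cases hx : φ x ≤ (α₀ : EReal)
    · exact hxs x hx
    · calc φ xs ≤ φ x₀ := hxs x₀ hφx₀.le
        _ = (α₀ : EReal) := hφx₀
        _ ≤ φ x := (not_le.mp hx).le
  obtain ⟨xstar, hxstar⟩ := hφmin
  set mR : ℝ := (φ xstar).toReal with hmR
  have hm : φ xstar = (mR : EReal) :=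
    (EReal.coe_toReal (ne_top_of_le_ne_top hx₀ (hxstar x₀)) (hφnb xstar)).symm
  -- β is never ⊥
  have hβnb : ∀ z : H, (⊥ : EReal) < ⨅ x : X, f x z := by
    intro z
    obtain ⟨U, hUopen, hzU, B, hBcomp, hBsub⟩ := hflev z 0
    have hlsc : LowerSemicontinuous (fun x : WeakSpace ℝ X => f x z) := by
      have hcont : Continuous (fun x : WeakSpace ℝ X =>
          ((x, z) : WeakSpace ℝ X × WeakSpace ℝ H)) :=
        continuous_id.prodMk continuous_const
      exact (LowerSemicontinuous.comp hflsc hcont :)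
    have hclosed : IsClosed {x : WeakSpace ℝ X | f x z ≤ ((0 : ℝ) : EReal)} :=
      hlsc.isClosed_preimage _
    by_cases hne : ({x : X | f x z ≤ ((0 : ℝ) : EReal)} : Set X).Nonempty
    · obtain ⟨x₁, hx₁⟩ := hne
      have hscomp : IsCompact
          (show Set (WeakSpace ℝ X) from B ∩ {x : X | f x z ≤ ((0 : ℝ) : EReal)}) :=
        hBcomp.inter_right hclosed
      obtain ⟨x₂, hx₂mem, hx₂⟩ := aux_min_on_compact hlsc hscomp
        ⟨x₁, hBsub z hzU hx₁, hx₁⟩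
      have hmin : ∀ x : X, min (f x₂ z) ((0 : ℝ) : EReal) ≤ f x z := by
        intro x
        by_cases hx : f x z ≤ ((0 : ℝ) : EReal)
        · exact (min_le_left _ _).trans (hx₂ x ⟨hBsub z hzU hx, hx⟩)
        · exact (min_le_right _ _).trans (not_le.mp hx).le
      exact lt_of_lt_of_le (lt_min (Ne.bot_lt (hfnb x₂ z)) (EReal.bot_lt_coe 0))
        (le_iInf hmin)
    · exact lt_of_lt_of_le (EReal.bot_lt_coe 0)
        (le_iInf fun x => (not_le.mp fun h => hne ⟨x, h⟩).le)
  -- dual value is a real number qR ≤ mR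
  have hq_le : dualq f σ A ybar cbar ≤ (mR : EReal) := by
    have h1 : dualq f σ A ybar cbar ≤ lagr f σ A ybar cbar xstar 0 := iInf₂_le xstar 0
    have h2 : lagr f σ A ybar cbar xstar 0 = (mR : EReal) := by
      simp [lagr, hA00, inner_zero_left, hσ0, hdual xstar, hm]
    rwa [h2] at h1
  set qR : ℝ := (dualq f σ A ybar cbar).toReal with hqR
  have hqE : dualq f σ A ybar cbar = (qR : EReal) :=
    (EReal.coe_toReal (ne_top_of_le_ne_top (EReal.coe_ne_top mR) hq_le) hqbar).symm
  have hqmR : qR ≤ mR := by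
    have := hq_le; rw [hqE] at this; exact_mod_cast this
  have hαf0 : (0 : ℝ) ≤ mR - qR := by linarith
  -- nonnegativity of the penalization term
  have ht0 : ∀ (n : ℕ) (z : H), (0 : EReal) ≤ ((n : ℝ) : EReal) * σ z := fun n z => by
    rw [EReal.coe_coe_eq_natCast, ereal_natCast_mul (hσpos z)]
    exact nsmul_nonneg (hσpos z) n
  -- σ-bound on sublevel sets of the Lagrangian
  have hσbound : ∀ n : ℕ, cbar < (n : ℝ) → 1 ≤ n → ∀ (x : X) (z : H),
      lagr f σ A ybar (n : ℝ) x z ≤ (mR : EReal) →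
      σ z ≤ (((mR - qR) / ((n : ℝ) - cbar)) : EReal) := by
    intro n hcn h1n x z hle
    have hn0 : (0 : ℝ) < (n : ℝ) := by exact_mod_cast Nat.pos_of_ne_zero (by omega)
    have hnpos : (0 : ℝ) < (n : ℝ) - cbar := by linarith
    have hσtop : σ z ≠ ⊤ := by
      intro htop
      have hmul : (((n : ℝ)) : EReal) * σ z = ⊤ := by
        rw [htop]; exact EReal.mul_top_of_pos (EReal.coe_pos.mpr hn0)
      have hT : lagr f σ A ybar (n : ℝ) x z = ⊤ := by
        simp only [lagr, hmul]
        exact EReal.add_top_of_ne_bot (ereal_sub_coe_ne_bot (hfnb x z) _)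
      rw [hT] at hle
      exact (EReal.coe_lt_top mR).not_ge hle
    set sz := (σ z).toReal with hszdef
    have hσzE : σ z = (sz : EReal) := (EReal.coe_toReal hσtop (hσnb z)).symm
    have hftop : f x z ≠ ⊤ := by
      intro htop
      have hT : lagr f σ A ybar (n : ℝ) x z = ⊤ := by
        simp only [lagr, htop, hσzE, ← EReal.coe_mul, EReal.top_sub_coe, EReal.top_add_coe]
      rw [hT] at hle
      exact (EReal.coe_lt_top mR).not_ge hle
    set fR := (f x z).toReal with hfRdef
    have hfE : f x z = (fR : EReal) := (EReal.coe_toReal hftop (hfnb x z)).symm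
    have hlag : lagr f σ A ybar (n : ℝ) x z
        = ((fR - (inner ℝ (A z) ybar : ℝ) + (n : ℝ) * sz : ℝ) : EReal) := by
      simp only [lagr, hfE, hσzE, ← EReal.coe_mul, ← EReal.coe_sub, ← EReal.coe_add]
    have hlagc : lagr f σ A ybar cbar x z
        = ((fR - (inner ℝ (A z) ybar : ℝ) + cbar * sz : ℝ) : EReal) := by
      simp only [lagr, hfE, hσzE, ← EReal.coe_mul, ← EReal.coe_sub, ← EReal.coe_add]
    have hq2 : qR ≤ fR - (inner ℝ (A z) ybar : ℝ) + cbar * sz := by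
      have h3 : dualq f σ A ybar cbar ≤ lagr f σ A ybar cbar x z := by
        exact le_trans (iInf_le (fun x' : X => ⨅ z' : H, lagr f σ A ybar cbar x' z') x)
          (iInf_le _ z)
      rw [hqE, hlagc] at h3
      exact_mod_cast h3
    have hreal : fR - (inner ℝ (A z) ybar : ℝ) + (n : ℝ) * sz ≤ mR := by
      rw [hlag] at hle; exact_mod_cast hle
    have hsz0 : 0 ≤ sz := by
      have := hσpos z; rw [hσzE] at this; exact_mod_cast this
    have hfinal : sz ≤ (mR - qR) / ((n : ℝ) - cbar) := by
      rw [le_div_iff₀ hnpos]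
      nlinarith
    rw [hσzE]
    exact EReal.coe_le_coe_iff.mpr hfinal
  -- f-bound on sublevel sets of the Lagrangian
  set αf : ℝ := mR + Kσ * ‖ybar‖ with hαfdef
  have hf_bound : ∀ (c : ℝ) (x : X) (z : H), (0 : EReal) ≤ (c : EReal) * σ z →
      lagr f σ A ybar c x z ≤ (mR : EReal) → σ z ≤ (Kσ : EReal) →
      f x z ≤ (αf : EReal) := by
    intro c x z ht hle hσK
    have h1 : f x z - ((inner ℝ (A z) ybar : ℝ) : EReal) ≤ (mR : EReal) := by
      refine le_trans ?_ hle
      calc f x z - ((inner ℝ (A z) ybar : ℝ) : EReal)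
          = f x z - ((inner ℝ (A z) ybar : ℝ) : EReal) + 0 := (add_zero _).symm
        _ ≤ f x z - ((inner ℝ (A z) ybar : ℝ) : EReal) + (c : EReal) * σ z :=
            add_le_add_right ht _
    have h2 : f x z ≤ (mR : EReal) + ((inner ℝ (A z) ybar : ℝ) : EReal) :=
      (EReal.sub_le_iff_le_add (Or.inl (EReal.coe_ne_bot _))
        (Or.inl (EReal.coe_ne_top _))).mp h1
    have hAz : ‖A z‖ ≤ Kσ := by exact_mod_cast (hA0 z).trans hσK
    have hr : (inner ℝ (A z) ybar : ℝ) ≤ Kσ * ‖ybar‖ :=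
      (real_inner_le_norm _ _).trans (mul_le_mul_of_nonneg_right hAz (norm_nonneg _))
    calc f x z ≤ (mR : EReal) + ((inner ℝ (A z) ybar : ℝ) : EReal) := h2
      _ = ((mR + (inner ℝ (A z) ybar : ℝ) : ℝ) : EReal) := (EReal.coe_add _ _).symm
      _ ≤ (αf : EReal) := EReal.coe_le_coe_iff.mpr (by rw [hαfdef]; linarith)
  -- gam is the infimum of the Lagrangian over x
  have hgam_eq : ∀ (n : ℕ), 1 ≤ n → ∀ z : H,
      gam f σ A ybar n z = ⨅ x : X, lagr f σ A ybar (n : ℝ) x z := by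
    intro n h1n z
    by_cases hσz : σ z = ⊤
    · have hn0 : (0 : ℝ) < (n : ℝ) := by exact_mod_cast Nat.pos_of_ne_zero (by omega)
      have hmul : (((n : ℝ)) : EReal) * σ z = ⊤ := by
        rw [hσz]; exact EReal.mul_top_of_pos (EReal.coe_pos.mpr hn0)
      have hL : ∀ x : X, lagr f σ A ybar (n : ℝ) x z = ⊤ := fun x => by
        simp only [lagr, hmul]
        exact EReal.add_top_of_ne_bot (ereal_sub_coe_ne_bot (hfnb x z) _)
      have hR : gam f σ A ybar n z = ⊤ := by
        simp only [gam, ← EReal.coe_coe_eq_natCast, hmul]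
        exact EReal.add_top_of_ne_bot (ereal_sub_coe_ne_bot (hβnb z).ne' _)
      rw [hR]
      symm
      simp only [hL, iInf_const]
    · set sz := (σ z).toReal with hszdef
      have hσzE : σ z = (sz : EReal) := (EReal.coe_toReal hσz (hσnb z)).symm
      set s : ℝ := -(inner ℝ (A z) ybar : ℝ) + (n : ℝ) * sz with hs
      have hrw : ∀ a : EReal,
          a - ((inner ℝ (A z) ybar : ℝ) : EReal) + (((n : ℝ)) : EReal) * σ z
            = a + (s : EReal) := by
        intro a
        rw [hσzE, ← EReal.coe_mul, sub_eq_add_neg, ← EReal.coe_neg, add_assoc,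
          ← EReal.coe_add, ← hs]
      have hgamval : gam f σ A ybar n z = (⨅ x : X, f x z) + (s : EReal) := by
        simp only [gam, ← EReal.coe_coe_eq_natCast]
        exact hrw _
      rw [hgamval, ereal_iInf_add_coe]
      exact iInf_congr fun x => (hrw (f x z)).symm
  -- bounding ball for the σ-sublevel set
  obtain ⟨R, hRball⟩ := hσcc.subset_closedBall 0
  set R' : ℝ := max R 0 with hR'
  set CH : Set H := Metric.closedBall (0 : H) R' with hCH
  have hCsub : {z : H | σ z ≤ (Kσ : EReal)} ⊆ CH :=
    fun z hz => Metric.closedBall_subset_closedBall (le_max_left _ _) (hRball hz)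
  have hCcomp : IsCompact (show Set (WeakSpace ℝ H) from CH) :=
    wcompact_closedBall H R'
  -- finite subcover providing a compact set in X
  choose U hUopen hUmem B hBcomp hBsub using fun z₀ : H => hflev z₀ αf
  have hcov : (show Set (WeakSpace ℝ H) from CH) ⊆
      ⋃ i : CH, (show Set (WeakSpace ℝ H) from U (i : H)) :=
    fun z hz => Set.mem_iUnion.mpr ⟨⟨z, hz⟩, hUmem z⟩
  obtain ⟨t, ht⟩ := hCcomp.elim_finite_subcover _ (fun i : CH => hUopen (i : H)) hcov
  have hKXcomp : IsCompact
      (show Set (WeakSpace ℝ X) from ⋃ i ∈ t, B ((i : CH) : H)) :=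
    t.isCompact_biUnion fun i _ => hBcomp (i : H)
  -- lower semicontinuity of the penalization term on the product
  have hσlsc2 : ∀ m : ℕ,
      LowerSemicontinuous (fun p : WeakSpace ℝ X × WeakSpace ℝ H => m • σ p.2) := by
    intro m
    induction m with
    | zero =>
      have hzero : (fun p : WeakSpace ℝ X × WeakSpace ℝ H => (0 : ℕ) • σ p.2)
          = fun _ => (0 : EReal) := by funext p; rw [zero_smul]
      rw [hzero]; exact lowerSemicontinuous_const
    | succ k ih =>
      have hsucc : (fun p : WeakSpace ℝ X × WeakSpace ℝ H => (k + 1) • σ p.2)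
          = fun p : WeakSpace ℝ X × WeakSpace ℝ H => k • σ p.2 + σ p.2 := by
        funext p; rw [succ_nsmul]
      rw [hsucc]
      exact lsc_add_of_ne_bot ih (LowerSemicontinuous.comp (g := fun p : WeakSpace ℝ X × WeakSpace ℝ H => p.2) hσwlsc continuous_snd :)
        (fun p => (hbot0.trans_le (nsmul_nonneg (hσpos p.2) k)).ne')
        (fun p => hσnb p.2)
  -- key: minimizers for large n
  obtain ⟨n₁, hn₁⟩ := exists_nat_ge (cbar + 1 + (mR - qR) / Kσ)
  set n₀ := max n₁ 1 with hn₀def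
  have hkey : ∀ n : ℕ, n₀ ≤ n → ∃ w : H,
      (gam f σ A ybar n w = ⨅ z : H, gam f σ A ybar n z) ∧
      σ w ≤ (((mR - qR) / ((n : ℝ) - cbar)) : EReal) ∧
      w ∈ CH := by
    intro n hn
    have h1n : 1 ≤ n := le_trans (le_max_right _ _) hn
    have hnR : cbar + 1 + (mR - qR) / Kσ ≤ (n : ℝ) :=
      hn₁.trans (by exact_mod_cast le_trans (le_max_left _ _) hn)
    have hdivnn : 0 ≤ (mR - qR) / Kσ := div_nonneg hαf0 hKσpos.le
    have hcn : cbar < (n : ℝ) := by linarith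
    have hεK : (mR - qR) / ((n : ℝ) - cbar) ≤ Kσ := by
      rw [div_le_iff₀ (by linarith)]
      have h2 : (mR - qR) / Kσ ≤ (n : ℝ) - cbar - 1 := by linarith
      rw [div_le_iff₀ hKσpos] at h2
      nlinarith
    set Ln : WeakSpace ℝ X × WeakSpace ℝ H → EReal :=
      fun p => lagr f σ A ybar (n : ℝ) p.1 p.2 with hLndef
    have hLlsc : LowerSemicontinuous Ln := by
      have hg1 : LowerSemicontinuous (fun p : WeakSpace ℝ X × WeakSpace ℝ H =>
          f p.1 p.2 + ((-(inner ℝ (A p.2) ybar : ℝ) : ℝ) : EReal)) := by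
        refine lsc_add_of_ne_bot hflsc ?_ (fun p => hfnb p.1 p.2)
          (fun p => EReal.coe_ne_bot _)
        have hl2 : LowerSemicontinuous
            (fun z : WeakSpace ℝ H => -(inner ℝ (A z) ybar : ℝ)) := usc_neg (hA1 ybar)
        have hl3 : LowerSemicontinuous
            (fun p : WeakSpace ℝ X × WeakSpace ℝ H => -(inner ℝ (A p.2) ybar : ℝ)) :=
          (LowerSemicontinuous.comp (g := fun p : WeakSpace ℝ X × WeakSpace ℝ H => p.2) hl2 continuous_snd :)
        exact continuous_coe_real_ereal.comp_lowerSemicontinuous hl3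
          (fun a b hab => EReal.coe_le_coe_iff.mpr hab)
      have hg2 : LowerSemicontinuous (fun p : WeakSpace ℝ X × WeakSpace ℝ H =>
          (((n : ℝ)) : EReal) * σ p.2) := by
        have heq : (fun p : WeakSpace ℝ X × WeakSpace ℝ H => (((n : ℝ)) : EReal) * σ p.2)
            = fun p : WeakSpace ℝ X × WeakSpace ℝ H => n • σ p.2 := by
          funext p
          rw [EReal.coe_coe_eq_natCast, ereal_natCast_mul (hσpos p.2)]
        rw [heq]; exact hσlsc2 n
      have hLn_eq : Ln = fun p : WeakSpace ℝ X × WeakSpace ℝ H =>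
          (f p.1 p.2 + ((-(inner ℝ (A p.2) ybar : ℝ) : ℝ) : EReal)) + (((n : ℝ)) : EReal) * σ p.2 := by
        funext p
        simp only [hLndef, lagr, sub_eq_add_neg, EReal.coe_neg]
      rw [hLn_eq]
      exact lsc_add_of_ne_bot hg1 hg2
        (fun p => ereal_add_coe_ne_bot (hfnb p.1 p.2) _)
        (fun p => (hbot0.trans_le (ht0 n p.2)).ne')
    set T : Set (WeakSpace ℝ X × WeakSpace ℝ H) := {p | Ln p ≤ (mR : EReal)} with hTdef
    have hTclosed : IsClosed T := hLlsc.isClosed_preimage _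
    have hmemT : ((xstar : WeakSpace ℝ X), (0 : WeakSpace ℝ H)) ∈ T := by
      show lagr f σ A ybar (n : ℝ) xstar 0 ≤ (mR : EReal)
      have hval : lagr f σ A ybar (n : ℝ) xstar 0 = (mR : EReal) := by
        simp [lagr, hA00, inner_zero_left, hσ0, hdual xstar, hm]
      exact le_of_eq hval
    have hTsub : T ⊆
        (show Set (WeakSpace ℝ X) from ⋃ i ∈ t, B ((i : CH) : H)) ×ˢ
        (show Set (WeakSpace ℝ H) from CH) := by
      rintro ⟨x, z⟩ hp
      have hσz : σ z ≤ (((mR - qR) / ((n : ℝ) - cbar)) : EReal) := hσbound n hcn h1n x z hp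
      have hσK : σ z ≤ (Kσ : EReal) := hσz.trans (EReal.coe_le_coe_iff.mpr hεK)
      have hzC : z ∈ CH := hCsub hσK
      have hfx : f x z ≤ (αf : EReal) := hf_bound (n : ℝ) x z (ht0 n z) hp hσK
      obtain ⟨i, hit, hzi⟩ := Set.mem_iUnion₂.mp (ht hzC)
      exact ⟨Set.mem_biUnion hit (hBsub (i : H) z hzi hfx), hzC⟩
    have hTcomp : IsCompact T :=
      (hKXcomp.prod hCcomp).of_isClosed_subset hTclosed hTsub
    obtain ⟨⟨xn, vn⟩, hvT, hvmin⟩ := aux_min_on_compact hLlsc hTcomp ⟨_, hmemT⟩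
    have hmin_all : ∀ (x : X) (z : H), Ln (xn, vn) ≤ lagr f σ A ybar (n : ℝ) x z := by
      intro x z
      by_cases h : lagr f σ A ybar (n : ℝ) x z ≤ (mR : EReal)
      · exact hvmin (x, z) h
      · exact hvT.trans (not_le.mp h).le
    refine ⟨vn, ?_, hσbound n hcn h1n xn vn hvT, (hTsub hvT).2⟩
    apply le_antisymm
    · refine le_iInf fun z => ?_
      have h1 : gam f σ A ybar n vn ≤ Ln (xn, vn) := by
        rw [hgam_eq n h1n vn]; exact iInf_le _ xn
      have h2 : Ln (xn, vn) ≤ gam f σ A ybar n z := by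
        rw [hgam_eq n h1n z]; exact le_iInf fun x => hmin_all x z
      exact h1.trans h2
    · exact iInf_le _ vn
  -- assemble the sequence
  set v : ℕ → H := fun n => if h : n₀ ≤ n then (hkey n h).choose else 0 with hv
  refine ⟨n₀, v, ?_, ?_, ?_⟩
  · intro n hn
    simp only [hv, dif_pos hn]
    exact ((hkey n hn).choose_spec).1
  · refine ⟨R', fun n => ?_⟩
    by_cases h : n₀ ≤ n
    · have hvn : v n = (hkey n h).choose := by simp only [hv]; rw [dif_pos h]
      rw [hvn]
      have h3 : dist ((hkey n h).choose) (0 : H) ≤ R' := ((hkey n h).choose_spec).2.2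
      rwa [dist_zero_right] at h3
    · simp only [hv, dif_neg h, norm_zero]
      exact le_max_right _ _
  · -- weak convergence to 0
    have htendW : Tendsto (fun n : ℕ => (show WeakSpace ℝ H from v n))
        atTop (𝓝 (0 : WeakSpace ℝ H)) := by
      rw [tendsto_nhds]
      intro V hVopen hV0
      set D : ℕ → Set (WeakSpace ℝ H) :=
        fun j => {z : H | σ z ≤ ((1 / ((j : ℝ) + 1) : ℝ) : EReal)} with hDdef
      have hDclosed : ∀ j, IsClosed (D j) := fun j => hσwlsc.isClosed_preimage _
      have hCU : IsCompact
          ((show Set (WeakSpace ℝ H) from CH) ∩ Vᶜ) :=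
        hCcomp.inter_right hVopen.isClosed_compl
      have hempty : ((show Set (WeakSpace ℝ H) from CH) ∩ Vᶜ)
          ∩ ⋂ j, D j = ∅ := by
        ext z
        simp only [Set.mem_inter_iff, Set.mem_iInter, Set.mem_empty_iff_false, iff_false,
          Set.mem_compl_iff, not_and, and_imp]
        rintro ⟨hzC, hzV⟩ hzD
        apply hzV
        have hz0 : z = 0 := by
          apply hσargmin
          refine le_antisymm ?_ (hσpos z)
          by_contra hpos
          have hpos' : (0 : EReal) < σ z := not_le.mp hpos
          obtain ⟨c, hc1, hc2⟩ := EReal.exists_between_coe_real hpos'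
          have hc0 : (0 : ℝ) < c := by exact_mod_cast EReal.coe_zero ▸ hc1
          obtain ⟨j, hj⟩ := exists_nat_one_div_lt hc0
          have hzj := hzD j
          exact absurd hzj (not_le.mpr (lt_trans (EReal.coe_lt_coe_iff.mpr hj) hc2))
        rw [hz0]
        exact hV0
      obtain ⟨tJ, htJ⟩ := hCU.elim_finite_subfamily_closed D hDclosed hempty
      set J := tJ.sup id with hJdef
      have hJin : ∀ z : H, z ∈ CH →
          σ z ≤ ((1 / ((J : ℝ) + 1) : ℝ) : EReal) → (z : WeakSpace ℝ H) ∈ V := by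
        intro z hzC hzJ
        by_contra hzV
        have hzD : ∀ j ∈ tJ, (z : WeakSpace ℝ H) ∈ D j := by
          intro j hj
          have hjJ : (j : ℝ) + 1 ≤ (J : ℝ) + 1 := by
            have : j ≤ J := Finset.le_sup (f := id) hj
            exact_mod_cast Nat.succ_le_succ this
          refine hzJ.trans (EReal.coe_le_coe_iff.mpr ?_)
          apply one_div_le_one_div_of_le
          · positivity
          · exact hjJ
        have hzmem : (z : WeakSpace ℝ H) ∈
            ((show Set (WeakSpace ℝ H) from CH) ∩ Vᶜ)
            ∩ ⋂ j ∈ tJ, D j :=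
          ⟨⟨hzC, hzV⟩, Set.mem_iInter₂.mpr hzD⟩
        rw [htJ] at hzmem
        exact hzmem
      have hεtend : Tendsto (fun n : ℕ => (mR - qR) / ((n : ℝ) - cbar)) atTop (𝓝 0) := by
        apply Tendsto.div_atTop tendsto_const_nhds
        have hbase := tendsto_natCast_atTop_atTop (R := ℝ)
        simpa [sub_eq_add_neg] using tendsto_atTop_add_const_right atTop (-cbar) hbase
      have hev1 : ∀ᶠ n : ℕ in atTop, (mR - qR) / ((n : ℝ) - cbar) < 1 / ((J : ℝ) + 1) :=
        hεtend.eventually_lt_const (by positivity)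
      filter_upwards [hev1, eventually_ge_atTop n₀] with n h1 h2
      have hvn : v n = (hkey n h2).choose := by simp only [hv]; rw [dif_pos h2]
      obtain ⟨-, hσv, hCv⟩ := (hkey n h2).choose_spec
      show (show WeakSpace ℝ H from v n) ∈ V
      rw [hvn]
      exact hJin _ hCv (hσv.trans (EReal.coe_le_coe_iff.mpr h1.le))
    intro L
    have hev : Continuous (fun z : WeakSpace ℝ H => L z) :=
      WeakBilin.eval_continuous ((topDualPairing ℝ H).flip) L
    exact (hev.tendsto (0 : WeakSpace ℝ H)).comp htendW
end
end

section
/- Assume (H0)–(H2), (A0), (A1). Let (ŷ,ĉ) ∈ H × ℝ₊ satisfy q(ŷ,ĉ) > −∞, and set T := {(w,c) ∈ H × ℝ₊ : c > ĉ + ‖w − ŷ‖}. Then: (iiA) q(w,c) > −∞ for every (w,c) ∈ T (i.e. T ⊆ dom q); and (iiB) if (ŷ,ĉ) is a dual solution then every (w,c) ∈ T is a dual solution. -/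
open Filter Topology Bornology

noncomputable section

private lemma lagr_mono_aux {X H : Type*} [NormedAddCommGroup H] [InnerProductSpace ℝ H]
    (f : X → H → EReal) (σ : H → EReal) (A : H → H)
    (hfbot : ∀ x z, f x z ≠ ⊥)
    (hσpos : ∀ z, 0 ≤ σ z)
    (hA0 : ∀ z, (‖A z‖ : EReal) ≤ σ z)
    (yh : H) (ch : ℝ) (hch : 0 ≤ ch)
    (w : H) (c : ℝ) (hlt : ch + ‖w - yh‖ < c)
    (x : X) (z : H) :
    lagr f σ A yh ch x z ≤ lagr f σ A w c x z := by
  have hc0 : (0:ℝ) < c := lt_of_le_of_lt (by positivity) hlt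
  unfold lagr
  rcases eq_or_ne (σ z) ⊤ with hs | hs
  · -- σ z = ⊤ : RHS = ⊤
    have h1 : (c : EReal) * σ z = ⊤ := by
      rw [hs]; exact EReal.coe_mul_top_of_pos hc0
    have h2 : f x z - ((inner ℝ (A z) w : ℝ) : EReal) ≠ ⊥ := by
      intro h
      rw [sub_eq_add_neg, ← EReal.coe_neg, EReal.add_eq_bot_iff] at h
      rcases h with h | h
      · exact hfbot x z h
      · exact (EReal.coe_ne_bot _) h
    rw [h1, EReal.add_top_of_ne_bot h2]
    exact le_top
  · lift σ z to ℝ using ⟨hs, fun h => absurd (hσpos z) (by rw [h]; simp)⟩ with s hsz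
    have hs0 : (0:ℝ) ≤ s := by
      have h := hσpos z
      rw [← hsz] at h
      exact_mod_cast h
    rcases eq_or_ne (f x z) ⊤ with hf | hf
    · rw [hf]
      rw [show (⊤:EReal) - ((inner ℝ (A z) yh : ℝ) : EReal) = ⊤ from rfl,
          show (⊤:EReal) - ((inner ℝ (A z) w : ℝ) : EReal) = ⊤ from rfl]
      rw [show ((ch:EReal)) * (s:EReal) = ((ch*s : ℝ):EReal) from (EReal.coe_mul ch s).symm,
          show ((c:EReal)) * (s:EReal) = ((c*s : ℝ):EReal) from (EReal.coe_mul c s).symm]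
      rw [EReal.top_add_coe, EReal.top_add_coe]
    · lift f x z to ℝ using ⟨hf, hfbot x z⟩ with a ha
      have key : a - inner ℝ (A z) yh + ch * s ≤ a - inner ℝ (A z) w + c * s := by
        have h1 : (inner ℝ (A z) w : ℝ) - inner ℝ (A z) yh ≤ ‖A z‖ * ‖w - yh‖ := by
          have := real_inner_le_norm (A z) (w - yh)
          rwa [inner_sub_right] at this
        have h2 : ‖A z‖ ≤ s := by
          have h := hA0 z
          rw [← hsz] at h
          exact_mod_cast h
        have h3 : ‖w - yh‖ ≤ c - ch := by linarith
        nlinarith [norm_nonneg (A z), norm_nonneg (w - yh)]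
      calc ((a:EReal)) - ((inner ℝ (A z) yh : ℝ) : EReal) + (ch:EReal) * (s:EReal)
          = ((a - inner ℝ (A z) yh + ch * s : ℝ) : EReal) := by
            rw [← EReal.coe_mul, ← EReal.coe_sub, ← EReal.coe_add]
        _ ≤ ((a - inner ℝ (A z) w + c * s : ℝ) : EReal) := by exact_mod_cast key
        _ = ((a:EReal)) - ((inner ℝ (A z) w : ℝ) : EReal) + (c:EReal) * (s:EReal) := by
            rw [← EReal.coe_mul, ← EReal.coe_sub, ← EReal.coe_add]

/-- If `q(ŷ,ĉ) > −∞` then every `(w,c)` with `c > ĉ + ‖w − ŷ‖` is in the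
domain of `q`; and if `(ŷ,ĉ)` is a dual solution then every such `(w,c)` is a dual
solution as well. -/
theorem dual_domain_and_solution_cone
    {X H : Type*} [NormedAddCommGroup X] [NormedSpace ℝ X] [CompleteSpace X]
    [NormedAddCommGroup H] [InnerProductSpace ℝ H] [CompleteSpace H]
    (hrefl : IsReflexiveSpace X)
    (φ : X → EReal)
    (hφproper : (∀ x, φ x ≠ ⊥) ∧ (∃ x, φ x ≠ ⊤))
    (hφwlsc : WLsc φ)
    (hφlev : ∀ α : ℝ, WCompact {x : X | φ x ≤ (α : EReal)})
    (f : X → H → EReal)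
    (hdual : ∀ x, f x 0 = φ x)
    (hfproper : (∀ x z, f x z ≠ ⊥) ∧ (∃ x z, f x z ≠ ⊤))
    (hflsc : WLsc2 fun p : X × H => f p.1 p.2)
    (hflev : WLevelCompact f)
    (σ : H → EReal)
    (hσpos : ∀ z, 0 ≤ σ z)
    (hσ0 : σ 0 = 0)
    (hσargmin : ∀ z, σ z = 0 → z = 0)
    (hσwlsc : WLsc σ)
    (A : H → H)
    (hA0 : ∀ z, (‖A z‖ : EReal) ≤ σ z)
    (hA1 : ∀ y : H, WUsc fun z => (inner ℝ (A z) y : ℝ))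
    (yh : H) (ch : ℝ) (hch : 0 ≤ ch) (hqh : dualq f σ A yh ch ≠ ⊥) :
    (∀ (w : H) (c : ℝ), 0 ≤ c → ch + ‖w - yh‖ < c → dualq f σ A w c ≠ ⊥) ∧
      (DualSol f σ A yh ch →
        ∀ (w : H) (c : ℝ), 0 ≤ c → ch + ‖w - yh‖ < c → DualSol f σ A w c) := by
  have hmono : ∀ (w : H) (c : ℝ), ch + ‖w - yh‖ < c →
      dualq f σ A yh ch ≤ dualq f σ A w c := fun w c hlt =>
    iInf_mono fun x => iInf_mono fun z =>
      lagr_mono_aux f σ A hfproper.1 hσpos hA0 yh ch hch w c hlt x z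
  constructor
  · intro w c _ hlt h
    exact hqh (le_bot_iff.mp (h ▸ hmono w c hlt))
  · intro hsol w c hc hlt
    exact ⟨hc, fun y' c' hc' => (hsol.2 y' c' hc').trans (hmono w c hlt)⟩
end
end

section
/- Assume (H0)–(H2), (A0), (A1), strong duality M_P = M_D, and that σ is conditionally coercive with constant K_σ. Let (ŷ,ĉ) ∈ H × ℝ₊ satisfy q(ŷ,ĉ) > −∞ and let s ≥ M_P. Define Φ_{(w,c)}(x,z) := f(x,z) − ⟨A(z),w⟩ + c σ(z) and T̃(s) := {(w,c) ∈ H × ℝ₊ : c > ĉ + (s − q(ŷ,ĉ))/K_σ + ‖w − ŷ‖}. Then for every (w,c) ∈ T̃(s) the level set {(x,z) ∈ X × H : Φ_{(w,c)}(x,z) ≤ s} is nonempty and weakly compact, and there exists (x̃,z̃) ∈ X × H such that q(w,c) = f(x̃,z̃) − ⟨A(z̃),w⟩ + c σ(z̃), i.e. the infimum defining q(w,c) is attained. -/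
open Filter Topology Bornology

noncomputable section

private lemma ereal_mul_nonneg {a b : EReal} (ha : 0 ≤ a) (hb : 0 ≤ b) : 0 ≤ a * b := by
  rcases eq_or_lt_of_le ha with h | h
  · simp [← h]
  rcases eq_or_lt_of_le hb with h' | h'
  · simp [← h']
  · exact (EReal.mul_pos h h').le

private lemma lsc_exists_min {α : Type*} [TopologicalSpace α] {s : Set α}
    (hs : IsCompact s) (hne : s.Nonempty) {g : α → EReal}
    (hg : LowerSemicontinuous g) : ∃ x ∈ s, ∀ y ∈ s, g x ≤ g y := by
  by_contra hcon
  push_neg at hcon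
  set m : EReal := sInf (g '' s) with hm
  have hml : ∀ x ∈ s, m ≤ g x := fun x hx => sInf_le ⟨x, hx, rfl⟩
  have hlt : ∀ x ∈ s, m < g x := by
    intro x hx
    rcases (hml x hx).lt_or_eq with h | h
    · exact h
    · obtain ⟨y, hy, hylt⟩ := hcon x hx
      rw [← h] at hylt
      exact absurd (hml y hy) (not_le.2 hylt)
  choose t ht1 ht2 using fun (x : α) (hx : x ∈ s) => exists_between (hlt x hx)
  have hcov : s ⊆ ⋃ i : s, {y | t i i.2 < g y} := by
    intro x hx
    exact Set.mem_iUnion.2 ⟨⟨x, hx⟩, ht2 x hx⟩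
  obtain ⟨F, hF⟩ := hs.elim_finite_subcover (fun i : s => {y | t i i.2 < g y})
    (fun i => hg.isOpen_preimage _) hcov
  obtain ⟨x₀, hx₀⟩ := hne
  obtain ⟨i₀, hi₀F, _⟩ := Set.mem_iUnion₂.1 (hF hx₀)
  have h1 : m < F.inf' ⟨i₀, hi₀F⟩ (fun i => t i i.2) := by
    exact (Finset.lt_inf'_iff _).2 fun i _ => ht1 i i.2
  have h2 : ∀ y ∈ s, F.inf' ⟨i₀, hi₀F⟩ (fun i => t i i.2) ≤ g y := by
    intro y hy
    obtain ⟨j, hjF, hj⟩ := Set.mem_iUnion₂.1 (hF hy)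
    exact (Finset.inf'_le _ hjF).trans (le_of_lt hj)
  have : F.inf' ⟨i₀, hi₀F⟩ (fun i => t i i.2) ≤ m :=
    le_sInf (by rintro b ⟨y, hy, rfl⟩; exact h2 y hy)
  exact absurd h1 (not_lt.2 this)

private lemma hilbert_wcompact {H : Type*} [NormedAddCommGroup H] [InnerProductSpace ℝ H]
    [CompleteSpace H] {Z : Set H} (hb : IsBounded Z)
    (hc : IsClosed (show Set (WeakSpace ℝ H) from Z)) :
    IsCompact (show Set (WeakSpace ℝ H) from Z) := by
  classical
  set e := InnerProductSpace.toDual ℝ H with he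
  set g : WeakDual ℝ H → WeakSpace ℝ H := fun φ => e.symm φ with hgdef
  have hgcont : Continuous g := by
    apply WeakBilin.continuous_of_continuous_eval
    intro l
    have heq : (fun φ : WeakDual ℝ H => (topDualPairing ℝ H).flip (g φ) l)
        = fun φ : WeakDual ℝ H => φ (e.symm l) := by
      funext φ
      show l (e.symm φ) = φ (e.symm l)
      conv_lhs => rw [← e.apply_symm_apply l]
      rw [InnerProductSpace.toDual_apply_apply]
      rw [real_inner_comm]
      exact InnerProductSpace.toDual_symm_apply
    rw [heq]
    exact WeakBilin.eval_continuous _ _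
  set T : Set (WeakDual ℝ H) := g ⁻¹' Z with hT
  have hTclosed : IsClosed T := hc.preimage hgcont
  have hTbdd : IsBounded (StrongDual.toWeakDual ⁻¹' T) := by
    obtain ⟨R, hR⟩ := hb.subset_closedBall 0
    apply (Metric.isBounded_closedBall (x := (0 : StrongDual ℝ H)) (r := R)).subset
    intro l hl
    have h1 : e.symm l ∈ Z := hl
    have h2 : ‖e.symm l‖ ≤ R := by
      have := hR h1
      simpa [Metric.mem_closedBall, dist_zero_right] using this
    have h3 : ‖l‖ = ‖e.symm l‖ := by
      conv_lhs => rw [← e.apply_symm_apply l]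
      exact e.norm_map (e.symm l)
    simp only [Metric.mem_closedBall, dist_zero_right]
    rw [show ‖l‖ = ‖(l : StrongDual ℝ H)‖ from rfl] at *
    exact h3 ▸ h2
  have hTcomp : IsCompact T := WeakDual.isCompact_of_bounded_of_closed (WeakDual.isBounded_toWeakDual_preimage_iff_isBounded.1 hTbdd) hTclosed
  have himg : g '' T = Z := by
    apply Set.image_preimage_eq_of_subset
    intro z _
    exact ⟨e z, by simp [hgdef]; exact e.symm_apply_apply z⟩
  rw [show (show Set (WeakSpace ℝ H) from Z) = g '' T from himg.symm]
  exact hTcomp.image hgcont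

private lemma ereal_const_mul_continuous {c : ℝ} (hc : 0 < c) :
    Continuous fun t : EReal => (c : EReal) * t := by
  rw [continuous_iff_continuousAt]
  intro t
  have h := EReal.continuousAt_mul (p := ((c : EReal), t))
    (Or.inl (by simp [EReal.coe_eq_zero, hc.ne'])) (Or.inl (by simp [EReal.coe_eq_zero, hc.ne']))
    (Or.inl (by simp)) (Or.inl (by simp))
  exact h.comp ((continuous_const.prodMk continuous_id).continuousAt)

private lemma lagr_wlsc {X H : Type*} [NormedAddCommGroup X] [NormedSpace ℝ X]
    [NormedAddCommGroup H] [InnerProductSpace ℝ H]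
    {f : X → H → EReal} {σ : H → EReal} {A : H → H} {w : H} {c : ℝ}
    (hflsc : LowerSemicontinuous
      (show WeakSpace ℝ X × WeakSpace ℝ H → EReal from fun p => f p.1 p.2))
    (hσwlsc : LowerSemicontinuous (show WeakSpace ℝ H → EReal from σ))
    (hA1 : UpperSemicontinuous (show WeakSpace ℝ H → ℝ from fun z => (inner ℝ (A z) w : ℝ)))
    (hfbot : ∀ x z, f x z ≠ ⊥) (hσpos : ∀ z, 0 ≤ σ z) (hc : 0 < c) :
    LowerSemicontinuous
      (show WeakSpace ℝ X × WeakSpace ℝ H → EReal from fun p => lagr f σ A w c p.1 p.2) := by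
  have h2 : LowerSemicontinuous
      (show WeakSpace ℝ X × WeakSpace ℝ H → EReal from
        fun p => ((-(inner ℝ (A p.2) w) : ℝ) : EReal)) := by
    have hlz : LowerSemicontinuous
        (show WeakSpace ℝ H → EReal from fun z => ((-(inner ℝ (A z) w) : ℝ) : EReal)) := by
      have hcm : Continuous (fun r : ℝ => ((-r : ℝ) : EReal)) :=
        continuous_coe_real_ereal.comp continuous_neg
      have hanti : Antitone (fun r : ℝ => ((-r : ℝ) : EReal)) := by
        intro a b hab
        simp only [EReal.coe_le_coe_iff]
        linarith
      exact hcm.comp_upperSemicontinuous_antitone hA1 hanti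
    exact hlz.comp continuous_snd
  have h3 : LowerSemicontinuous
      (show WeakSpace ℝ X × WeakSpace ℝ H → EReal from fun p => (c : EReal) * σ p.2) := by
    have hmono : Monotone (fun t : EReal => (c : EReal) * t) := fun a b hab =>
      mul_le_mul_of_nonneg_left hab (by exact_mod_cast hc.le)
    have := (ereal_const_mul_continuous hc).comp_lowerSemicontinuous
      (hσwlsc.comp (continuous_snd :
        Continuous fun p : WeakSpace ℝ X × WeakSpace ℝ H => p.2)) hmono
    exact this
  have h12 : LowerSemicontinuous
      (show WeakSpace ℝ X × WeakSpace ℝ H → EReal from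
        fun p => f p.1 p.2 + ((-(inner ℝ (A p.2) w) : ℝ) : EReal)) := by
    apply hflsc.add' h2
    intro p
    apply EReal.continuousAt_add
    · exact Or.inr (EReal.coe_ne_bot _)
    · exact Or.inl (hfbot p.1 p.2)
  have hsum : LowerSemicontinuous
      (show WeakSpace ℝ X × WeakSpace ℝ H → EReal from
        fun p => (f p.1 p.2 + ((-(inner ℝ (A p.2) w) : ℝ) : EReal)) + (c : EReal) * σ p.2) := by
    apply h12.add' h3
    intro p
    have hnn : 0 ≤ (c : EReal) * σ p.2 :=
      ereal_mul_nonneg (by exact_mod_cast hc.le) (hσpos p.2)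
    apply EReal.continuousAt_add
    · exact Or.inr (lt_of_lt_of_le (by simp : (⊥ : EReal) < 0) hnn).ne'
    · refine Or.inl ?_
      rw [ne_eq, EReal.add_eq_bot_iff]
      push_neg
      exact ⟨hfbot p.1 p.2, EReal.coe_ne_bot _⟩
  have heq : (show WeakSpace ℝ X × WeakSpace ℝ H → EReal from
      fun p => lagr f σ A w c p.1 p.2) =
      (show WeakSpace ℝ X × WeakSpace ℝ H → EReal from
        fun p => (f p.1 p.2 + ((-(inner ℝ (A p.2) w) : ℝ) : EReal)) + (c : EReal) * σ p.2) := by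
    funext p
    simp only [lagr, sub_eq_add_neg, ← EReal.coe_neg]
  rw [heq]
  exact hsum

/-- For `(w,c)` in the set `T̃(s)`, the level set of the function
`Φ_{(w,c)}` at height `s` is nonempty and weakly compact, and the infimum defining
`q(w,c)` is attained. -/
theorem levelSet_weaklyCompact_and_attainment
    {X H : Type*} [NormedAddCommGroup X] [NormedSpace ℝ X] [CompleteSpace X]
    [NormedAddCommGroup H] [InnerProductSpace ℝ H] [CompleteSpace H]
    (hrefl : IsReflexiveSpace X)
    (φ : X → EReal)
    (hφproper : (∀ x, φ x ≠ ⊥) ∧ (∃ x, φ x ≠ ⊤))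
    (hφwlsc : WLsc φ)
    (hφlev : ∀ α : ℝ, WCompact {x : X | φ x ≤ (α : EReal)})
    (f : X → H → EReal)
    (hdual : ∀ x, f x 0 = φ x)
    (hfproper : (∀ x z, f x z ≠ ⊥) ∧ (∃ x z, f x z ≠ ⊤))
    (hflsc : WLsc2 fun p : X × H => f p.1 p.2)
    (hflev : WLevelCompact f)
    (σ : H → EReal)
    (hσpos : ∀ z, 0 ≤ σ z)
    (hσ0 : σ 0 = 0)
    (hσargmin : ∀ z, σ z = 0 → z = 0)
    (hσwlsc : WLsc σ)
    (A : H → H)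
    (hA0 : ∀ z, (‖A z‖ : EReal) ≤ σ z)
    (hA1 : ∀ y : H, WUsc fun z => (inner ℝ (A z) y : ℝ))
    (Kσ : ℝ) (hKσpos : 0 < Kσ) (hσcc : IsBounded {z : H | σ z ≤ (Kσ : EReal)})
    (hSD : MP φ = MD f σ A)
    (yh : H) (ch : ℝ) (hch : 0 ≤ ch)
    (qh : ℝ) (hqh : dualq f σ A yh ch = (qh : EReal))
    (s : ℝ) (hs : MP φ ≤ (s : EReal)) :
    ∀ (w : H) (c : ℝ), 0 ≤ c → ch + (s - qh) / Kσ + ‖w - yh‖ < c →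
      ({p : X × H | lagr f σ A w c p.1 p.2 ≤ (s : EReal)}).Nonempty ∧
      WCompact2 {p : X × H | lagr f σ A w c p.1 p.2 ≤ (s : EReal)} ∧
      ∃ (x : X) (z : H), dualq f σ A w c = lagr f σ A w c x z := by
  intro w c hc0 hcgt
  -- basic real facts
  have hqs : qh ≤ s := by
    have h1 : (qh : EReal) ≤ MD f σ A := by
      rw [← hqh]
      exact le_iSup_of_le yh (le_iSup_of_le ch (le_iSup_of_le hch le_rfl))
    rw [hSD] at hs
    exact_mod_cast h1.trans hs
  have hdivnn : 0 ≤ (s - qh) / Kσ := div_nonneg (by linarith) hKσpos.le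
  have hcpos : 0 < c := by
    have := norm_nonneg (w - yh)
    linarith
  set d : ℝ := c - ch - ‖w - yh‖ with hd_def
  have hd : (s - qh) / Kσ < d := by
    simp only [hd_def]; linarith
  have hdpos : 0 < d := lt_of_le_of_lt hdivnn hd
  have hdK : s - qh < d * Kσ := by
    rw [div_lt_iff₀ hKσpos] at hd
    linarith
  -- the key bound
  have key : ∀ x z, lagr f σ A w c x z ≤ (s : EReal) →
      σ z ≤ (Kσ : EReal) ∧ f x z ≤ ((s + Kσ * ‖w‖ : ℝ) : EReal) := by
    intro x z hle
    set a : ℝ := inner ℝ (A z) w with ha_def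
    set b : ℝ := inner ℝ (A z) yh with hb_def
    have hfb : f x z ≠ ⊥ := hfproper.1 x z
    have hσnn := hσpos z
    have hσb : σ z ≠ ⊥ := (lt_of_lt_of_le (by simp : (⊥ : EReal) < 0) hσnn).ne'
    rw [lagr] at hle
    have hfab : f x z - (a : EReal) ≠ ⊥ := by
      rw [sub_eq_add_neg, ← EReal.coe_neg, ne_eq, EReal.add_eq_bot_iff]
      push_neg
      exact ⟨hfb, EReal.coe_ne_bot _⟩
    have hσt : σ z ≠ ⊤ := by
      intro h
      rw [h, EReal.coe_mul_top_of_pos hcpos, EReal.add_top_of_ne_bot hfab] at hle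
      exact absurd hle (not_le.2 (EReal.coe_lt_top s))
    have hmulnb : (c : EReal) * σ z ≠ ⊥ := by
      have hnn : 0 ≤ (c : EReal) * σ z :=
        ereal_mul_nonneg (by exact_mod_cast hcpos.le) hσnn
      exact (lt_of_lt_of_le (by simp : (⊥ : EReal) < 0) hnn).ne'
    have hft : f x z ≠ ⊤ := by
      intro h
      rw [h] at hle
      have h1 : (⊤ : EReal) - (a : EReal) = ⊤ := by
        rw [sub_eq_add_neg, ← EReal.coe_neg, EReal.top_add_of_ne_bot (EReal.coe_ne_bot _)]
      rw [h1, EReal.top_add_of_ne_bot hmulnb] at hle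
      exact absurd hle (not_le.2 (EReal.coe_lt_top s))
    obtain ⟨F, hF⟩ : ∃ F : ℝ, f x z = F := ⟨(f x z).toReal, (EReal.coe_toReal hft hfb).symm⟩
    obtain ⟨v, hv⟩ : ∃ v : ℝ, σ z = v := ⟨(σ z).toReal, (EReal.coe_toReal hσt hσb).symm⟩
    rw [hF, hv] at hle
    have hle' : F - a + c * v ≤ s := by exact_mod_cast hle
    have hvnn : 0 ≤ v := by rw [hv] at hσnn; exact_mod_cast hσnn
    have hq : (qh : EReal) ≤ lagr f σ A yh ch x z := by
      have hdq' : dualq f σ A yh ch = ⨅ (x : X) (z : H), lagr f σ A yh ch x z := rfl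
      rw [← hqh, hdq']
      exact iInf_le_of_le x (iInf_le _ z)
    rw [lagr, hF, hv] at hq
    have hq' : qh ≤ F - b + ch * v := by exact_mod_cast hq
    have hAz : ‖A z‖ ≤ v := by
      have := hA0 z
      rw [hv] at this
      exact_mod_cast this
    have hab : a - b ≤ v * ‖w - yh‖ := by
      have h1 : a - b = (inner ℝ (A z) (w - yh) : ℝ) := by
        rw [inner_sub_right]
      have h2 : (inner ℝ (A z) (w - yh) : ℝ) ≤ ‖A z‖ * ‖w - yh‖ := real_inner_le_norm _ _
      have h3 : ‖A z‖ * ‖w - yh‖ ≤ v * ‖w - yh‖ :=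
        mul_le_mul_of_nonneg_right hAz (norm_nonneg _)
      linarith [h1 ▸ h2]
    have haw : a ≤ v * ‖w‖ :=
      le_trans (real_inner_le_norm _ _) (mul_le_mul_of_nonneg_right hAz (norm_nonneg _))
    have h5 : d * v ≤ s - qh := by
      simp only [hd_def]
      nlinarith [hle', hq', hab]
    have hvK : v ≤ Kσ := by nlinarith [h5, hdK, hdpos]
    constructor
    · rw [hv]; exact_mod_cast hvK
    · rw [hF]
      have : F ≤ s + Kσ * ‖w‖ := by
        nlinarith [mul_nonneg hcpos.le hvnn, norm_nonneg w, haw, hle',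
          mul_le_mul_of_nonneg_right hvK (norm_nonneg w)]
      exact_mod_cast this
  -- the compact container
  set Zs : Set H := {z : H | σ z ≤ (Kσ : EReal)} with hZdef
  set Zset : Set (WeakSpace ℝ H) := show Set (WeakSpace ℝ H) from Zs with hZset
  have hZclosed : IsClosed Zset := hσwlsc.isClosed_preimage _
  have hZcomp : IsCompact Zset := hilbert_wcompact hσcc hZclosed
  set al : ℝ := s + Kσ * ‖w‖ with hal
  choose U hUopen hUmem B hBcomp hBsub using fun z₀ : H => hflev z₀ al
  obtain ⟨t, ht⟩ := hZcomp.elim_finite_subcover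
    (fun z₀ : H => (show Set (WeakSpace ℝ H) from U z₀)) (fun z₀ => hUopen z₀)
    (fun z _ => Set.mem_iUnion.2 ⟨z, hUmem z⟩)
  set Bu : Set (WeakSpace ℝ X) := ⋃ i ∈ t, (show Set (WeakSpace ℝ X) from B i) with hBu
  have hBucomp : IsCompact Bu :=
    t.finite_toSet.isCompact_biUnion (fun i _ => hBcomp i)
  -- the level set
  have hlsc : LowerSemicontinuous
      (show WeakSpace ℝ X × WeakSpace ℝ H → EReal from fun p => lagr f σ A w c p.1 p.2) :=
    lagr_wlsc hflsc hσwlsc (hA1 w) hfproper.1 hσpos hcpos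
  set LS : Set (WeakSpace ℝ X × WeakSpace ℝ H) :=
    {p : X × H | lagr f σ A w c p.1 p.2 ≤ (s : EReal)} with hLSdef
  have hLSclosed : IsClosed LS := hlsc.isClosed_preimage _
  have hLSsub : LS ⊆ Bu ×ˢ Zset := by
    rintro ⟨x, z⟩ hp
    obtain ⟨hσK, hfα⟩ := key x z hp
    have hzZ : z ∈ Zset := hσK
    obtain ⟨i, hit, hiU⟩ := Set.mem_iUnion₂.1 (ht hzZ)
    exact ⟨Set.mem_biUnion hit (hBsub i z hiU hfα), hzZ⟩
  have hLScomp : IsCompact LS := (hBucomp.prod hZcomp).of_isClosed_subset hLSclosed hLSsub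
  -- nonemptiness
  have hs1 : (s : EReal) < ((s + 1 : ℝ) : EReal) := by exact_mod_cast lt_add_one s
  have hMPlt : MP φ < ((s + 1 : ℝ) : EReal) := lt_of_le_of_lt hs hs1
  obtain ⟨x₁, hx₁⟩ : ∃ x, φ x < ((s + 1 : ℝ) : EReal) := by
    rw [MP] at hMPlt
    exact iInf_lt_iff.1 hMPlt
  obtain ⟨x₀, hx₀C, hx₀min⟩ := lsc_exists_min (hφlev (s + 1)) ⟨x₁, hx₁.le⟩ hφwlsc
  have hφx₀ : φ x₀ ≤ (s : EReal) := by
    by_contra hgt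
    push_neg at hgt
    have hall : ∀ x, min ((s + 1 : ℝ) : EReal) (φ x₀) ≤ φ x := by
      intro x
      by_cases hx : φ x ≤ ((s + 1 : ℝ) : EReal)
      · exact le_trans (min_le_right _ _) (hx₀min x hx)
      · exact le_trans (min_le_left _ _) (not_le.1 hx).le
    have h1 : min ((s + 1 : ℝ) : EReal) (φ x₀) ≤ MP φ := le_iInf hall
    have h2 : (s : EReal) < min ((s + 1 : ℝ) : EReal) (φ x₀) := lt_min hs1 hgt
    exact absurd (h1.trans hs) (not_le.2 h2)
  have hA00 : A 0 = 0 := by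
    have h1 := hA0 0
    rw [hσ0] at h1
    have h2 : ‖A 0‖ ≤ (0 : ℝ) := by exact_mod_cast h1
    simpa using norm_le_zero_iff.1 h2
  have hp₀ : lagr f σ A w c x₀ 0 ≤ (s : EReal) := by
    unfold lagr
    rw [hσ0, hA00, show f x₀ 0 = φ x₀ from hdual x₀]
    simpa [inner_zero_left, mul_zero, sub_zero] using hφx₀
  have hLSne : LS.Nonempty := ⟨(x₀, 0), hp₀⟩
  -- attainment
  obtain ⟨⟨xt, zt⟩, hmem, hminLS⟩ := lsc_exists_min hLScomp hLSne hlsc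
  refine ⟨hLSne, hLScomp, xt, zt, ?_⟩
  have hdq : dualq f σ A w c = ⨅ (x : X) (z : H), lagr f σ A w c x z := rfl
  rw [hdq]
  apply le_antisymm
  · exact iInf_le_of_le xt (iInf_le _ zt)
  · refine le_iInf fun x => le_iInf fun z => ?_
    by_cases hxz : lagr f σ A w c x z ≤ (s : EReal)
    · exact hminLS (x, z) hxz
    · exact le_trans hmem (not_le.1 hxz).le
end
end

section
/- Let {(x_k,z_k)} and {(y_k,c_k)} be generated by DSG under (H0)–(H2), (A0), (A1) with strong duality M_P = M_D = q̄ (the optimal dual value). If the sequence {z_k} converges weakly to 0 in H, then: the dual values q_k := q(y_k,c_k) converge to q̄; the primal sequence {x_k} is bounded in X; and every weak accumulation point of {x_k} is a primal solution (a minimizer of φ over X). -/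
open Filter Topology Bornology

noncomputable section

private lemma wseq_tendsto {X : Type*} [NormedAddCommGroup X] [NormedSpace ℝ X]
    {u : ℕ → X} {l : X} (h : WSeqConv u l) :
    Tendsto (show ℕ → WeakSpace ℝ X from u) atTop (𝓝 (show WeakSpace ℝ X from l)) := by
  refine (WeakBilin.tendsto_iff_forall_eval_tendsto _ ?_).2 ?_
  · intro a b hab
    by_contra hne
    obtain ⟨f, hf⟩ := SeparatingDual.exists_ne_zero (R := ℝ) (V := X) (sub_ne_zero.2 hne)
    have h2 : (topDualPairing ℝ X).flip a f = (topDualPairing ℝ X).flip b f := by rw [hab]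
    simp only [LinearMap.flip_apply, topDualPairing_apply] at h2
    rw [map_sub, h2, sub_self] at hf
    exact hf rfl
  · intro L
    exact h L

private lemma wcompact_bounded {X : Type*} [NormedAddCommGroup X] [NormedSpace ℝ X]
    {B : Set X} (hB : WCompact B) : ∃ C : ℝ, ∀ v ∈ B, ‖v‖ ≤ C := by
  have hpt : ∀ L : StrongDual ℝ X, ∃ C, ∀ b : B,
      ‖NormedSpace.inclusionInDoubleDual ℝ X (b : X) L‖ ≤ C := by
    intro L
    have hcont : Continuous fun v : WeakSpace ℝ X => ‖L v‖ :=
      (WeakBilin.eval_continuous _ L).norm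
    obtain ⟨C, hC⟩ := (hB.image hcont).bddAbove
    refine ⟨C, fun b => ?_⟩
    have h1 := hC (Set.mem_image_of_mem _ b.2)
    simpa [NormedSpace.dual_def] using h1
  obtain ⟨C', hC'⟩ := banach_steinhaus hpt
  refine ⟨C', fun v hv => ?_⟩
  have h1 := hC' ⟨v, hv⟩
  have h2 : ‖NormedSpace.inclusionInDoubleDual ℝ X v‖ = ‖v‖ :=
    (NormedSpace.inclusionInDoubleDualLi ℝ (E := X)).norm_map v
  rwa [h2] at h1

private lemma core_ineq (s : EReal) (hs : 0 ≤ s) (nA : ℝ) (h0nA : 0 ≤ nA) (hnA : (nA : EReal) ≤ s)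
    (p u szk stk ak ck : ℝ) (hu : |u| ≤ nA * szk) (hszk : 0 ≤ szk) (hst : 0 < stk)
    (hak : 0 < ak) (hck : 0 ≤ ck) :
    -(p : EReal) + (ck : EReal) * s ≤
      -((p - stk * u : ℝ) : EReal) + ((ck + (ak + 1) * stk * szk : ℝ) : EReal) * s := by
  induction s using EReal.rec with
  | bot => exact absurd hs (by simp)
  | coe sr =>
      have hnA' : nA ≤ sr := EReal.coe_le_coe_iff.1 hnA
      rw [← EReal.coe_mul, ← EReal.coe_mul, ← EReal.coe_neg, ← EReal.coe_neg, ← EReal.coe_add,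
        ← EReal.coe_add, EReal.coe_le_coe_iff]
      have h1 := (abs_le.1 hu).1
      nlinarith [mul_nonneg (mul_nonneg hak.le hst.le) (mul_nonneg hszk (h0nA.trans hnA')),
        mul_le_mul_of_nonneg_left hnA' (mul_nonneg (mul_nonneg (by linarith : (0:ℝ) ≤ ak + 1) hst.le) hszk),
        mul_le_mul_of_nonneg_left h1 hst.le]
  | top =>
      rcases eq_or_lt_of_le (by positivity : (0:ℝ) ≤ ck + (ak + 1) * stk * szk) with h0 | hpos
      · have hx : 0 ≤ (ak + 1) * stk * szk :=
          mul_nonneg (mul_nonneg (by linarith) hst.le) hszk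
        have hszk0 : szk = 0 := by
          by_contra hne
          have : 0 < (ak + 1) * stk * szk :=
            mul_pos (mul_pos (by linarith) hst) (lt_of_le_of_ne hszk (Ne.symm hne))
          linarith
        have hck0 : ck = 0 := by rw [hszk0] at h0; linarith [mul_zero ((ak + 1) * stk)]
        have hu0 : u = 0 := by
          have h2 : |u| ≤ 0 := by rw [hszk0] at hu; simpa using hu
          exact abs_eq_zero.1 (le_antisymm h2 (abs_nonneg u))
        rw [hck0, hu0, hszk0]
        norm_num
      · rw [EReal.coe_mul_top_of_pos hpos, EReal.add_top_of_ne_bot (by rw [← EReal.coe_neg]; exact EReal.coe_ne_bot _)]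
        exact le_top

/-- If the sequence `{z_k}` generated by DSG converges weakly to `0`,
then `q_k → q̄`, the primal sequence `{x_k}` is bounded, and every weak accumulation point
of `{x_k}` is a primal solution. -/
theorem dsg_weak_zk_convergence_implies_primal_convergence
    {X H : Type*} [NormedAddCommGroup X] [NormedSpace ℝ X] [CompleteSpace X]
    [NormedAddCommGroup H] [InnerProductSpace ℝ H] [CompleteSpace H]
    (hrefl : IsReflexiveSpace X)
    (φ : X → EReal)
    (hφproper : (∀ x, φ x ≠ ⊥) ∧ (∃ x, φ x ≠ ⊤))
    (hφwlsc : WLsc φ)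
    (hφlev : ∀ α : ℝ, WCompact {x : X | φ x ≤ (α : EReal)})
    (f : X → H → EReal)
    (hdual : ∀ x, f x 0 = φ x)
    (hfproper : (∀ x z, f x z ≠ ⊥) ∧ (∃ x z, f x z ≠ ⊤))
    (hflsc : WLsc2 fun p : X × H => f p.1 p.2)
    (hflev : WLevelCompact f)
    (σ : H → EReal)
    (hσpos : ∀ z, 0 ≤ σ z)
    (hσ0 : σ 0 = 0)
    (hσargmin : ∀ z, σ z = 0 → z = 0)
    (hσwlsc : WLsc σ)
    (A : H → H)
    (hA0 : ∀ z, (‖A z‖ : EReal) ≤ σ z)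
    (hA1 : ∀ y : H, WUsc fun z => (inner ℝ (A z) y : ℝ))
    (hSD : MP φ = MD f σ A)
    (x : ℕ → X) (z y : ℕ → H) (c st a r σz : ℕ → ℝ)
    (hσz : ∀ k, (σz k : EReal) = σ (z k))
    (abar : ℝ) (habar : 0 < abar) (ha : ∀ k, 0 < a k ∧ a k < abar)
    (hst : ∀ k, 0 < st k)
    (hrpos : ∀ k, 0 ≤ r k) (hrlim : Tendsto r atTop (𝓝 0))
    (hc0 : 0 ≤ c 0) (hq0 : dualq f σ A (y 0) (c 0) ≠ ⊥)
    (hxz : ∀ k, lagr f σ A (y k) (c k) (x k) (z k) ≤ dualq f σ A (y k) (c k) + (r k : EReal))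
    (hy : ∀ k, y (k + 1) = y k - st k • A (z k))
    (hc : ∀ k, c (k + 1) = c k + (a k + 1) * st k * σz k)
    (hzconv : WSeqConv z 0) :
    Tendsto (fun k => dualq f σ A (y k) (c k)) atTop (𝓝 (MD f σ A)) ∧
      (∃ M : ℝ, ∀ k, ‖x k‖ ≤ M) ∧
      ∀ (xb : X) (ψ : ℕ → ℕ), StrictMono ψ → WSeqConv (fun n => x (ψ n)) xb →
        ∀ x' : X, φ xb ≤ φ x' := by
  
  classical
  -- basic consequences
  have hA00 : A 0 = 0 := by
    have h1 := hA0 (0 : H)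
    rw [hσ0] at h1
    have h2 : ‖A (0:H)‖ ≤ (0:ℝ) := by exact_mod_cast h1
    simpa using norm_le_zero_iff.1 h2
  have hσznn : ∀ k, 0 ≤ σz k := by
    intro k
    have h1 := hσpos (z k)
    rw [← hσz k] at h1
    exact_mod_cast h1
  have hAzk : ∀ k, ‖A (z k)‖ ≤ σz k := by
    intro k
    have h1 := hA0 (z k)
    rw [← hσz k] at h1
    exact_mod_cast h1
  have hcnn : ∀ k, 0 ≤ c k := by
    intro k
    induction k with
    | zero => exact hc0
    | succ n ih =>
        rw [hc n]
        have h1 : 0 ≤ (a n + 1) * st n * σz n :=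
          mul_nonneg (mul_nonneg (by linarith [(ha n).1]) (hst n).le) (hσznn n)
        linarith
  -- monotonicity of the Lagrangian along the iterates
  have lagr_step : ∀ k (x' : X) (zz : H),
      lagr f σ A (y k) (c k) x' zz ≤ lagr f σ A (y (k+1)) (c (k+1)) x' zz := by
    intro k x' zz
    have hip : (inner ℝ (A zz) (y (k+1)) : ℝ)
        = (inner ℝ (A zz) (y k) : ℝ) - st k * (inner ℝ (A zz) (A (z k)) : ℝ) := by
      rw [hy k, inner_sub_right, real_inner_smul_right]
    have hu : |(inner ℝ (A zz) (A (z k)) : ℝ)| ≤ ‖A zz‖ * σz k :=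
      (abs_real_inner_le_norm _ _).trans (mul_le_mul_of_nonneg_left (hAzk k) (norm_nonneg _))
    have hcore := core_ineq (σ zz) (hσpos zz) ‖A zz‖ (norm_nonneg _) (hA0 zz)
        (inner ℝ (A zz) (y k)) (inner ℝ (A zz) (A (z k))) (σz k) (st k) (a k) (c k)
        hu (hσznn k) (hst k) (ha k).1 (hcnn k)
    unfold lagr
    rw [hip, hc k, sub_eq_add_neg, sub_eq_add_neg, add_assoc, add_assoc]
    exact add_le_add_right hcore _
  have lagr_from0 : ∀ k (x' : X) (zz : H),
      lagr f σ A (y 0) (c 0) x' zz ≤ lagr f σ A (y k) (c k) x' zz := by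
    intro k
    induction k with
    | zero => exact fun _ _ => le_rfl
    | succ n ih => exact fun x' zz => (ih x' zz).trans (lagr_step n x' zz)
  have hQmono : Monotone fun k => dualq f σ A (y k) (c k) :=
    monotone_nat_of_le_succ fun n =>
      iInf_mono fun x' => iInf_mono fun zz => lagr_step n x' zz
  -- the dual values are bounded by MP
  have hlagr_zero : ∀ (yv : H) (cv : ℝ) (x' : X), lagr f σ A yv cv x' 0 = φ x' := by
    intro yv cv x'
    unfold lagr
    rw [hdual x', hA00, hσ0, mul_zero, add_zero, inner_zero_left]
    rw [EReal.coe_zero, sub_eq_add_neg, neg_zero, add_zero]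
  have hqleMP : ∀ k, dualq f σ A (y k) (c k) ≤ MP φ := by
    intro k
    refine le_iInf fun x' => ?_
    exact le_trans (iInf₂_le x' (0 : H)) (le_of_eq (hlagr_zero _ _ x'))
  have hMPbot : MP φ ≠ ⊥ := fun h => hq0 (le_bot_iff.1 (h ▸ hqleMP 0))
  have hMPtop : MP φ ≠ ⊤ := by
    obtain ⟨x₀, hx₀⟩ := hφproper.2
    intro h
    exact hx₀ (top_le_iff.1 (h ▸ iInf_le φ x₀))
  set m : ℝ := (MP φ).toReal with hmdef
  have hm : (m : EReal) = MP φ := EReal.coe_toReal hMPtop hMPbot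
  have hQm : ∀ k, dualq f σ A (y k) (c k) ≤ (m : EReal) := fun k => (hqleMP k).trans hm.ge
  -- key upper bound on f (x k) (z k)
  have hstar : ∀ k, f (x k) (z k) - ((inner ℝ (A (z k)) (y 0) : ℝ) : EReal)
      ≤ dualq f σ A (y k) (c k) + (r k : EReal) := by
    intro k
    refine le_trans ?_ ((lagr_from0 k (x k) (z k)).trans (hxz k))
    show f (x k) (z k) - ((inner ℝ (A (z k)) (y 0) : ℝ) : EReal) ≤
      lagr f σ A (y 0) (c 0) (x k) (z k)
    unfold lagr
    have h0 : (0 : EReal) ≤ (c 0 : EReal) * σ (z k) := by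
      rw [← hσz k, ← EReal.coe_mul]
      exact_mod_cast mul_nonneg hc0 (hσznn k)
    calc f (x k) (z k) - ((inner ℝ (A (z k)) (y 0) : ℝ) : EReal)
        = f (x k) (z k) - ((inner ℝ (A (z k)) (y 0) : ℝ) : EReal) + 0 := (add_zero _).symm
      _ ≤ f (x k) (z k) - ((inner ℝ (A (z k)) (y 0) : ℝ) : EReal) + (c 0 : EReal) * σ (z k) :=
          add_le_add_right h0 _
  have hfupper : ∀ k, f (x k) (z k) ≤ dualq f σ A (y k) (c k) + (r k : EReal)
      + ((inner ℝ (A (z k)) (y 0) : ℝ) : EReal) := by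
    intro k
    have h1 := add_le_add_left (hstar k) (((inner ℝ (A (z k)) (y 0) : ℝ) : EReal))
    rwa [EReal.sub_add_cancel] at h1
  have hztend : Tendsto (show ℕ → WeakSpace ℝ H from z) atTop
      (𝓝 (show WeakSpace ℝ H from (0 : H))) := wseq_tendsto hzconv
  -- eventual upper bound on f (x k) (z k)
  have hfle : ∀ sb tb : ℝ, (∀ k, dualq f σ A (y k) (c k) ≤ (sb : EReal)) → sb < tb →
      ∀ᶠ k in atTop, f (x k) (z k) ≤ (tb : EReal) := by
    intro sb tb hub hlt
    have hδ : 0 < (tb - sb)/2 := by linarith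
    have h1 : ∀ᶠ k in atTop, r k < (tb - sb)/2 := hrlim.eventually_lt_const hδ
    have h2 := hA1 (y 0) (0 : WeakSpace ℝ H) ((tb - sb)/2) (by
      show (inner ℝ (A (0 : H)) (y 0) : ℝ) < (tb - sb)/2
      rw [hA00, inner_zero_left]
      exact hδ)
    have h2' : ∀ᶠ k in atTop, (inner ℝ (A (z k)) (y 0) : ℝ) < (tb - sb)/2 :=
      hztend.eventually h2
    filter_upwards [h1, h2'] with k hr hp
    calc f (x k) (z k)
        ≤ dualq f σ A (y k) (c k) + (r k : EReal) + ((inner ℝ (A (z k)) (y 0) : ℝ) : EReal) :=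
          hfupper k
      _ ≤ (sb : EReal) + (r k : EReal) + ((inner ℝ (A (z k)) (y 0) : ℝ) : EReal) :=
          add_le_add_left (add_le_add_left (hub k) _) _
      _ = ((sb + r k + inner ℝ (A (z k)) (y 0) : ℝ) : EReal) := by
          rw [EReal.coe_add, EReal.coe_add]
      _ ≤ (tb : EReal) := EReal.coe_le_coe_iff.2 (by linarith)
  refine ⟨?_, ?_, ?_⟩
  · -- convergence of the dual values
    have hS : (⨆ k, dualq f σ A (y k) (c k)) = MD f σ A := by
      refine le_antisymm (iSup_le fun k => hSD ▸ hqleMP k) ?_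
      rw [← hSD]
      by_contra hcon
      have hlt : (⨆ k, dualq f σ A (y k) (c k)) < MP φ := not_le.1 hcon
      have hSbot : (⨆ k, dualq f σ A (y k) (c k)) ≠ ⊥ := fun h =>
        hq0 (le_bot_iff.1 (h ▸ le_iSup (fun k => dualq f σ A (y k) (c k)) 0))
      have hStop : (⨆ k, dualq f σ A (y k) (c k)) ≠ ⊤ := (hlt.trans hMPtop.lt_top).ne
      set s : ℝ := (⨆ k, dualq f σ A (y k) (c k)).toReal with hsdef
      have hsE : (s : EReal) = ⨆ k, dualq f σ A (y k) (c k) := EReal.coe_toReal hStop hSbot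
      have hsm : s < m := by
        rw [← hsE, ← hm] at hlt
        exact_mod_cast hlt
      set t : ℝ := (s + m)/2 with htdef
      have hev1 : ∀ᶠ k in atTop, f (x k) (z k) ≤ (t : EReal) :=
        hfle s t (fun k => (le_iSup (fun k => dualq f σ A (y k) (c k)) k).trans_eq hsE.symm)
          (by linarith)
      obtain ⟨U, hUo, hU0, Bt, hBtc, hBt⟩ := hflev 0 t
      have hev2 : ∀ᶠ k in atTop, z k ∈ U := hztend.eventually (hUo.mem_nhds hU0)
      obtain ⟨K₀, hK₀⟩ := eventually_atTop.1 (hev1.and hev2)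
      have hxB : ∀ n : ℕ, x (n + K₀) ∈ Bt := fun n =>
        hBt (z (n + K₀)) (hK₀ _ (Nat.le_add_left _ _)).2 (hK₀ _ (Nat.le_add_left _ _)).1
      have hCc : IsCompact (insert (show WeakSpace ℝ H from (0:H))
          (Set.range (show ℕ → WeakSpace ℝ H from z))) := hztend.isCompact_insert_range
      have hKc : IsCompact ((show Set (WeakSpace ℝ X) from Bt) ×ˢ
          insert (show WeakSpace ℝ H from (0:H))
            (Set.range (show ℕ → WeakSpace ℝ H from z))) := hBtc.prod hCc
      set u' : ℕ → WeakSpace ℝ X × WeakSpace ℝ H :=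
        fun n => (show WeakSpace ℝ X from x (n + K₀), show WeakSpace ℝ H from z (n + K₀))
        with hu'def
      have hu'mem : ∀ n, u' n ∈ (show Set (WeakSpace ℝ X) from Bt) ×ˢ
          insert (show WeakSpace ℝ H from (0:H))
            (Set.range (show ℕ → WeakSpace ℝ H from z)) := fun n =>
        ⟨hxB n, Set.mem_insert_of_mem _ ⟨n + K₀, rfl⟩⟩
      obtain ⟨⟨xstar, zstar⟩, hpmem, hp⟩ :=
        hKc.exists_mapClusterPt (f := atTop) (u := u')
          (le_principal_iff.2 (Filter.mem_map.2 (Filter.Eventually.of_forall hu'mem)))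
      have hz0 : zstar = (show WeakSpace ℝ H from (0:H)) := by
        by_contra hne
        have hne' : (show H from zstar) ≠ 0 := fun h => hne h
        have hpos : (0:ℝ) < inner ℝ (show H from zstar) (show H from zstar) :=
          not_le.1 fun h => hne' (real_inner_self_nonpos.1 h)
        set L : StrongDual ℝ H := innerSL ℝ (show H from zstar) with hLdef
        have hLcont : Continuous fun w : WeakSpace ℝ H => L w :=
          WeakBilin.eval_continuous _ L
        have hVopen : IsOpen {w : WeakSpace ℝ H |
            inner ℝ (show H from zstar) (show H from zstar) / 2 < L w} :=
          isOpen_lt continuous_const hLcont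
        have hVp : zstar ∈ {w : WeakSpace ℝ H |
            inner ℝ (show H from zstar) (show H from zstar) / 2 < L w} := by
          show inner ℝ (show H from zstar) (show H from zstar) / 2
            < (inner ℝ (show H from zstar) (show H from zstar) : ℝ)
          linarith
        have hfr : ∃ᶠ n in atTop, u' n ∈
            (Set.univ ×ˢ {w : WeakSpace ℝ H |
              inner ℝ (show H from zstar) (show H from zstar) / 2 < L w}) :=
          (mapClusterPt_iff_frequently.1 hp) _ (prod_mem_nhds Filter.univ_mem (hVopen.mem_nhds hVp))
        have hfr2 : ∃ᶠ n in atTop,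
            inner ℝ (show H from zstar) (show H from zstar) / 2 < L (z (n + K₀)) :=
          hfr.mono fun n hn => hn.2
        have hten : Tendsto (fun n => L (z (n + K₀))) atTop (𝓝 0) := by
          have h0 := hzconv L
          rw [map_zero] at h0
          exact h0.comp (tendsto_add_atTop_nat K₀)
        have hev := hten.eventually_lt_const (by linarith :
          (0:ℝ) < inner ℝ (show H from zstar) (show H from zstar) / 2)
        obtain ⟨n, h1, h2⟩ := (hfr2.and_eventually hev).exists
        exact absurd h1 (not_lt.2 h2.le)
      subst hz0
      have hlt2 : (t : EReal) < f (show X from xstar) 0 := by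
        rw [hdual]
        calc (t : EReal) < (m : EReal) := EReal.coe_lt_coe_iff.2 (by linarith)
          _ = MP φ := hm
          _ ≤ φ (show X from xstar) := iInf_le φ _
      have hnb := hflsc (xstar, (show WeakSpace ℝ H from (0:H))) (t : EReal) hlt2
      have hfr := (mapClusterPt_iff_frequently.1 hp) _ hnb
      obtain ⟨n, hn⟩ := hfr.exists
      exact absurd (hK₀ (n + K₀) (Nat.le_add_left _ _)).1 (not_le.2 hn)
    exact hS ▸ tendsto_atTop_iSup hQmono
  · -- boundedness of the primal sequence
    have hev1 : ∀ᶠ k in atTop, f (x k) (z k) ≤ ((m + 1 : ℝ) : EReal) :=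
      hfle m (m + 1) hQm (lt_add_one m)
    obtain ⟨U, hUo, hU0, B, hBc, hB⟩ := hflev 0 (m + 1)
    have hev2 : ∀ᶠ k in atTop, z k ∈ U := hztend.eventually (hUo.mem_nhds hU0)
    obtain ⟨K, hK⟩ := eventually_atTop.1 (hev1.and hev2)
    obtain ⟨C, hC⟩ := wcompact_bounded hBc
    set D : ℝ := (Finset.range (K + 1)).sup' (Finset.nonempty_range_iff.2 K.succ_ne_zero)
      (fun k => ‖x k‖) with hDdef
    refine ⟨max C D, fun k => ?_⟩
    rcases le_or_gt K k with hk | hk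
    · exact le_max_of_le_left (hC _ (hB (z k) (hK k hk).2 (hK k hk).1))
    · exact le_max_of_le_right
        (Finset.le_sup' (fun k => ‖x k‖) (Finset.mem_range.2 (hk.trans (Nat.lt_succ_self K))))
  · -- weak accumulation points are primal solutions
    intro xb ψ hψ hconv x'
    have hmain : φ xb ≤ MP φ := by
      by_contra hcon
      have hgt : (m : EReal) < φ xb := hm ▸ not_le.1 hcon
      obtain ⟨t', hmt', ht'φ⟩ := exists_between hgt
      have ht'top : t' ≠ ⊤ := (ht'φ.trans_le le_top).ne
      have ht'bot : t' ≠ ⊥ := (bot_le.trans_lt hmt').ne'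
      set tr : ℝ := t'.toReal with htrdef
      have htr : (tr : EReal) = t' := EReal.coe_toReal ht'top ht'bot
      have hmtr : m < tr := by
        rw [← htr] at hmt'
        exact_mod_cast hmt'
      have hev1 : ∀ᶠ k in atTop, f (x k) (z k) ≤ (tr : EReal) := hfle m tr hQm hmtr
      have hpair : Tendsto
          (fun n => (show WeakSpace ℝ X from x (ψ n), show WeakSpace ℝ H from z (ψ n)))
          atTop (𝓝 (show WeakSpace ℝ X from xb, show WeakSpace ℝ H from (0:H))) :=
        Tendsto.prodMk_nhds (wseq_tendsto (X := X) hconv) (hztend.comp hψ.tendsto_atTop)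
      have hlt2 : (tr : EReal) < f xb 0 := by
        rw [hdual, htr]
        exact ht'φ
      have hnb := hflsc (show WeakSpace ℝ X from xb, show WeakSpace ℝ H from (0:H))
        (tr : EReal) hlt2
      have hev2 : ∀ᶠ n in atTop, (tr : EReal) < f (x (ψ n)) (z (ψ n)) :=
        hpair.eventually hnb
      have hev1' : ∀ᶠ n in atTop, f (x (ψ n)) (z (ψ n)) ≤ (tr : EReal) :=
        hψ.tendsto_atTop.eventually hev1
      obtain ⟨n, h1, h2⟩ := (hev2.and hev1').exists
      exact absurd h2 (not_le.2 h1)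
    exact hmain.trans (iInf_le φ x')
end
end

section
/- Consider DSG-1 (DSG with stepsizes s_k ∈ [η_k, β_k], η_k := min{η, ‖A(z_k)‖ + ‖z_k‖}, β_k := max{β, σ(z_k) + ‖z_k‖}, β > η > 0), generating an infinite dual sequence {(y_k,c_k)}. Assume (Γ₀): there exists R > 0 with r_k ≤ R σ(z_k) for all k, and assume the sequences {σ(z_k)} and {z_k} are bounded (as guaranteed by the boundedness result for σ(z_k)). If the dual solution set S(D) is nonempty, then the dual sequence {(y_k,c_k)} is bounded. -/
open Filter Topology Bornology

noncomputable section

set_option maxHeartbeats 1600000 in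
/-- For DSG-1, under `(Γ₀)` and boundedness of `{σ(z_k)}` and `{z_k}`,
if the dual solution set is nonempty then the dual sequence `{(y_k,c_k)}` is bounded. -/
theorem dsg1_dual_sequence_bounded
    {X H : Type*} [NormedAddCommGroup X] [NormedSpace ℝ X] [CompleteSpace X]
    [NormedAddCommGroup H] [InnerProductSpace ℝ H] [CompleteSpace H]
    (hrefl : IsReflexiveSpace X)
    (φ : X → EReal)
    (hφproper : (∀ x, φ x ≠ ⊥) ∧ (∃ x, φ x ≠ ⊤))
    (hφwlsc : WLsc φ)
    (hφlev : ∀ α : ℝ, WCompact {x : X | φ x ≤ (α : EReal)})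
    (f : X → H → EReal)
    (hdual : ∀ x, f x 0 = φ x)
    (hfproper : (∀ x z, f x z ≠ ⊥) ∧ (∃ x z, f x z ≠ ⊤))
    (hflsc : WLsc2 fun p : X × H => f p.1 p.2)
    (hflev : WLevelCompact f)
    (σ : H → EReal)
    (hσpos : ∀ z, 0 ≤ σ z)
    (hσ0 : σ 0 = 0)
    (hσargmin : ∀ z, σ z = 0 → z = 0)
    (hσwlsc : WLsc σ)
    (A : H → H)
    (hA0 : ∀ z, (‖A z‖ : EReal) ≤ σ z)
    (hA1 : ∀ y : H, WUsc fun z => (inner ℝ (A z) y : ℝ))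
    (hSD : MP φ = MD f σ A)
    (x : ℕ → X) (z y : ℕ → H) (c st a r σz : ℕ → ℝ)
    (hσz : ∀ k, (σz k : EReal) = σ (z k))
    (abar : ℝ) (habar : 0 < abar) (ha : ∀ k, 0 < a k ∧ a k < abar)
    (hst : ∀ k, 0 < st k)
    (hrpos : ∀ k, 0 ≤ r k) (hrlim : Tendsto r atTop (𝓝 0))
    (hc0 : 0 ≤ c 0) (hq0 : dualq f σ A (y 0) (c 0) ≠ ⊥)
    (hxz : ∀ k, lagr f σ A (y k) (c k) (x k) (z k) ≤ dualq f σ A (y k) (c k) + (r k : EReal))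
    (hy : ∀ k, y (k + 1) = y k - st k • A (z k))
    (hc : ∀ k, c (k + 1) = c k + (a k + 1) * st k * σz k)
    (η βs : ℝ) (hηpos : 0 < η) (hηβ : η < βs)
    (hstep : ∀ k, min η (‖A (z k)‖ + ‖z k‖) ≤ st k ∧ st k ≤ max βs (σz k + ‖z k‖))
    (hz : ∀ k, z k ≠ 0)
    (R : ℝ) (hR : 0 < R) (hΓ : ∀ k, r k ≤ R * σz k)
    (hσzbd : ∃ M : ℝ, ∀ k, σz k ≤ M) (hzbd : ∃ M : ℝ, ∀ k, ‖z k‖ ≤ M)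
    (hsol : ∃ (yd : H) (cd : ℝ), DualSol f σ A yd cd) :
    ∃ M : ℝ, ∀ k, ‖y k‖ + |c k| ≤ M := by
  classical
  obtain ⟨yb, cb, hcb0, hmax⟩ := hsol
  obtain ⟨x₀, hx₀⟩ := hφproper.2
  obtain ⟨Mσ₀, hMσ₀⟩ := hσzbd
  obtain ⟨Mz₀, hMz₀⟩ := hzbd
  -- basic sign facts
  have hσz0 : ∀ k, 0 ≤ σz k := by
    intro k
    have h := hσpos (z k)
    rw [← hσz k] at h
    exact_mod_cast h
  have hst0 : ∀ k, 0 ≤ st k := fun k => (hst k).le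
  have hcmono : Monotone c := by
    apply monotone_nat_of_le_succ
    intro k
    rw [hc k]
    have h1 : 0 ≤ (a k + 1) * st k * σz k :=
      mul_nonneg (mul_nonneg (by linarith [(ha k).1]) (hst k).le) (hσz0 k)
    linarith
  have hck0 : ∀ k, 0 ≤ c k := fun k => hc0.trans (hcmono (Nat.zero_le k))
  have hc0le : ∀ k, c 0 ≤ c k := fun k => hcmono (Nat.zero_le k)
  set Mσ : ℝ := max Mσ₀ 0 with hMσdef
  have hMσ : ∀ k, σz k ≤ Mσ := fun k => (hMσ₀ k).trans (le_max_left _ _)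
  have hMσ0 : 0 ≤ Mσ := le_max_right _ _
  set S : ℝ := max βs (Mσ + max Mz₀ 0) with hSdef
  have hS : ∀ k, st k ≤ S := by
    intro k
    refine (hstep k).2.trans (max_le_max le_rfl ?_)
    have h1 := hMσ k
    have h2 := (hMz₀ k).trans (le_max_left Mz₀ 0)
    linarith
  have hS0 : 0 ≤ S := le_trans (by linarith : (0:ℝ) ≤ βs) (le_max_left _ _)
  have hAz : ∀ k, ‖A (z k)‖ ≤ σz k := by
    intro k
    have h := hA0 (z k)
    rw [← hσz k] at h
    exact_mod_cast h
  -- dual values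
  have hqblt : dualq f σ A yb cb < ⊤ := by
    have hMD : dualq f σ A yb cb ≤ MD f σ A := by
      simp only [MD]
      exact le_iSup_of_le yb (le_iSup_of_le cb (le_iSup_of_le hcb0 le_rfl))
    have hMP : MP φ ≤ φ x₀ := by
      simp only [MP]; exact iInf_le _ _
    calc dualq f σ A yb cb ≤ MD f σ A := hMD
      _ = MP φ := hSD.symm
      _ ≤ φ x₀ := hMP
      _ < ⊤ := hx₀.lt_top
  have hqk_le : ∀ k, dualq f σ A (y k) (c k) ≤ dualq f σ A yb cb :=
    fun k => hmax (y k) (c k) (hck0 k)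
  have hqbbot : dualq f σ A yb cb ≠ ⊥ := by
    intro h
    exact hq0 (le_bot_iff.mp (h ▸ hqk_le 0))
  set Qb : ℝ := (dualq f σ A yb cb).toReal with hQbdef
  have hQbcoe : dualq f σ A yb cb = (Qb : EReal) :=
    (EReal.coe_toReal hqblt.ne hqbbot).symm
  -- the key approximate-supergradient inequality
  have key : ∀ k, (c k - cb) * σz k - r k ≤
      (inner ℝ (A (z k)) (y k) : ℝ) - (inner ℝ (A (z k)) yb : ℝ) := by
    intro k
    have hl : ∀ (w : H) (γ : ℝ), lagr f σ A w γ (x k) (z k)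
        = f (x k) (z k) - ((inner ℝ (A (z k)) w : ℝ) : EReal) + ((γ * σz k : ℝ) : EReal) := by
      intro w γ
      simp only [lagr]
      rw [← hσz k, ← EReal.coe_mul]
    have hqk_ne_top : dualq f σ A (y k) (c k) ≠ ⊤ := ((hqk_le k).trans_lt hqblt).ne
    have hsum_lt_top : dualq f σ A (y k) (c k) + (r k : EReal) < ⊤ :=
      EReal.add_lt_top hqk_ne_top (EReal.coe_ne_top _)
    have hfk_ne_top : f (x k) (z k) ≠ ⊤ := by
      intro h
      have h1 := hxz k
      rw [hl (y k) (c k), h, EReal.top_sub_coe, EReal.top_add_coe] at h1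
      exact hsum_lt_top.ne (top_le_iff.mp h1)
    have hFkcoe : f (x k) (z k) = (((f (x k) (z k)).toReal : ℝ) : EReal) :=
      (EReal.coe_toReal hfk_ne_top (hfproper.1 _ _)).symm
    set Fk : ℝ := (f (x k) (z k)).toReal with hFkdef
    have hlagr_coe : ∀ (w : H) (γ : ℝ), lagr f σ A w γ (x k) (z k)
        = ((Fk - (inner ℝ (A (z k)) w : ℝ) + γ * σz k : ℝ) : EReal) := by
      intro w γ
      rw [hl w γ, hFkcoe]
      norm_cast
    have hqk_ne_bot : dualq f σ A (y k) (c k) ≠ ⊥ := by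
      intro h
      have h1 := hxz k
      rw [hlagr_coe (y k) (c k), h] at h1
      simp only [EReal.bot_add] at h1
      exact EReal.coe_ne_bot _ (le_bot_iff.mp h1)
    set Qk : ℝ := (dualq f σ A (y k) (c k)).toReal with hQkdef
    have hQkcoe : dualq f σ A (y k) (c k) = (Qk : EReal) :=
      (EReal.coe_toReal hqk_ne_top hqk_ne_bot).symm
    -- (2)
    have h2 : Fk - (inner ℝ (A (z k)) (y k) : ℝ) + c k * σz k ≤ Qk + r k := by
      have h := hxz k
      rw [hlagr_coe (y k) (c k), hQkcoe] at h
      exact_mod_cast h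
    -- (1)
    have h1 : Qb ≤ Fk - (inner ℝ (A (z k)) yb : ℝ) + cb * σz k := by
      have h : dualq f σ A yb cb ≤ lagr f σ A yb cb (x k) (z k) := by
        simp only [dualq]
        exact iInf₂_le _ _
      rw [hQbcoe, hlagr_coe yb cb] at h
      exact_mod_cast h
    -- (3)
    have h3 : Qk ≤ Qb := by
      have h := hqk_le k
      rw [hQkcoe, hQbcoe] at h
      exact_mod_cast h
    nlinarith [h1, h2, h3]
  -- Lyapunov quantities
  set d : ℕ → ℝ := fun k => ‖y k - yb‖ ^ 2 with hddef
  set t : ℕ → ℝ := fun k => st k * σz k with htdef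
  set P : ℕ → ℝ := fun n => ∑ k ∈ Finset.range n, t k with hPdef
  have ht0 : ∀ k, 0 ≤ t k := fun k => mul_nonneg (hst0 k) (hσz0 k)
  have hPsucc : ∀ n, P (n + 1) = P n + t n := fun n => Finset.sum_range_succ t n
  have hPmono : Monotone P := by
    apply monotone_nat_of_le_succ
    intro n
    rw [hPsucc n]
    linarith [ht0 n]
  have hP0 : ∀ n, 0 ≤ P n := by
    intro n
    have : P 0 = 0 := by simp [hPdef]
    have := hPmono (Nat.zero_le n)
    simp [hPdef] at this ⊢
    exact Finset.sum_nonneg fun i _ => ht0 i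
  have hd0 : ∀ k, 0 ≤ d k := fun k => sq_nonneg _
  -- the per-step descent inequality
  have dstep : ∀ k, d (k + 1) ≤ d k + t k * (2 * (cb + R) + S * Mσ - 2 * c k) := by
    intro k
    have hyd : y (k + 1) - yb = (y k - yb) - st k • A (z k) := by
      rw [hy k]; abel
    have hexp : d (k + 1) = d k - 2 * (inner ℝ (y k - yb) (st k • A (z k)) : ℝ)
        + ‖st k • A (z k)‖ ^ 2 := by
      simp only [hddef]
      rw [hyd, norm_sub_sq_real]
    have hin1 : (inner ℝ (y k - yb) (st k • A (z k)) : ℝ)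
        = st k * ((inner ℝ (A (z k)) (y k) : ℝ) - (inner ℝ (A (z k)) yb : ℝ)) := by
      have hsub : (inner ℝ (y k - yb) (A (z k)) : ℝ)
          = (inner ℝ (A (z k)) (y k) : ℝ) - (inner ℝ (A (z k)) yb : ℝ) := by
        rw [inner_sub_left, real_inner_comm (y k), real_inner_comm yb]
      rw [real_inner_smul_right, hsub]
    have hns : ‖st k • A (z k)‖ = st k * ‖A (z k)‖ := by
      rw [norm_smul, Real.norm_eq_abs, abs_of_nonneg (hst0 k)]
    have hkey := key k
    have hΓk := hΓ k
    have hstk := hst0 k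
    have hAzk := hAz k
    have hMσk := hMσ k
    have hSk := hS k
    have hnn : 0 ≤ ‖A (z k)‖ := norm_nonneg _
    have h1 : st k * ((c k - cb) * σz k - r k)
        ≤ st k * ((inner ℝ (A (z k)) (y k) : ℝ) - (inner ℝ (A (z k)) yb : ℝ)) :=
      mul_le_mul_of_nonneg_left hkey hstk
    have h2 : st k * r k ≤ st k * (R * σz k) := mul_le_mul_of_nonneg_left hΓk hstk
    have h3 : (st k * ‖A (z k)‖) ^ 2 ≤ (st k * σz k) * (S * Mσ) := by
      have ha1 : st k * ‖A (z k)‖ ≤ st k * σz k := mul_le_mul_of_nonneg_left hAzk hstk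
      have ha2 : st k * ‖A (z k)‖ ≤ S * Mσ :=
        mul_le_mul hSk (hAzk.trans hMσk) hnn hS0
      have ha0 : 0 ≤ st k * ‖A (z k)‖ := mul_nonneg hstk hnn
      nlinarith
    rw [hexp, hin1, hns]
    simp only [htdef]
    nlinarith [h1, h2, h3]
  -- universal upper bounds via P
  set K : ℝ := max (2 * (cb + R) + S * Mσ - 2 * c 0) 0 with hKdef
  have hK0 : 0 ≤ K := le_max_right _ _
  have hdK : ∀ n, d n ≤ d 0 + K * P n := by
    intro n
    induction n with
    | zero => simp [hPdef]
    | succ n ih =>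
      have h1 := dstep n
      have hfac : 2 * (cb + R) + S * Mσ - 2 * c n ≤ K := by
        have := hc0le n
        have hle : 2 * (cb + R) + S * Mσ - 2 * c 0 ≤ K := le_max_left _ _
        linarith
      have h2 : t n * (2 * (cb + R) + S * Mσ - 2 * c n) ≤ t n * K :=
        mul_le_mul_of_nonneg_left hfac (ht0 n)
      rw [hPsucc n]
      have h3 : K * (P n + t n) = K * P n + K * t n := by ring
      linarith [h1, h2, ih, h3]
  have clow : ∀ n, c 0 + P n ≤ c n := by
    intro n
    induction n with
    | zero => simp [hPdef]
    | succ n ih =>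
      rw [hPsucc n, hc n]
      have h1 : t n ≤ (a n + 1) * st n * σz n := by
        have h2 : (1 : ℝ) * t n ≤ (a n + 1) * t n :=
          mul_le_mul_of_nonneg_right (by linarith [(ha n).1]) (ht0 n)
        simp only [htdef] at h2 ⊢
        nlinarith [h2]
      linarith
  have chigh : ∀ n, c n ≤ c 0 + (abar + 1) * P n := by
    intro n
    induction n with
    | zero => simp [hPdef]
    | succ n ih =>
      rw [hPsucc n, hc n]
      have h1 : (a n + 1) * st n * σz n ≤ (abar + 1) * t n := by
        have h2 : (a n + 1) * t n ≤ (abar + 1) * t n :=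
          mul_le_mul_of_nonneg_right (by linarith [(ha n).2]) (ht0 n)
        simp only [htdef] at h2 ⊢
        nlinarith [h2]
      have h3 : (abar + 1) * (P n + t n) = (abar + 1) * P n + (abar + 1) * t n := by ring
      linarith [h1, ih, h3]
  -- the partial sums P are bounded
  set Cs : ℝ := cb + R + S * Mσ / 2 + 1 with hCsdef
  have hdec : ∀ k, Cs ≤ c k → d (k + 1) + 2 * t k ≤ d k := by
    intro k hk
    have h1 := dstep k
    have hfac : 2 * (cb + R) + S * Mσ - 2 * c k ≤ -2 := by
      simp only [hCsdef] at hk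
      linarith
    have h2 : t k * (2 * (cb + R) + S * Mσ - 2 * c k) ≤ t k * (-2) :=
      mul_le_mul_of_nonneg_left hfac (ht0 k)
    nlinarith [h1, h2]
  have hPbdd : ∃ T : ℝ, 0 ≤ T ∧ ∀ n, P n ≤ T := by
    by_cases hcase : ∃ k₁, Cs ≤ c k₁
    · obtain ⟨k₁, hk₁⟩ := hcase
      refine ⟨P k₁ + d k₁ / 2, add_nonneg (hP0 k₁) (by linarith [hd0 k₁]), ?_⟩
      have claim : ∀ m, d (k₁ + m) + 2 * (P (k₁ + m) - P k₁) ≤ d k₁ := by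
        intro m
        induction m with
        | zero => simp
        | succ m ih =>
          have hck : Cs ≤ c (k₁ + m) := hk₁.trans (hcmono (Nat.le_add_right _ _))
          have h1 := hdec (k₁ + m) hck
          have h2 : k₁ + (m + 1) = (k₁ + m) + 1 := by ring
          rw [h2, hPsucc (k₁ + m)]
          linarith
      intro n
      rcases le_or_gt n k₁ with h | h
      · have := hPmono h
        linarith [hd0 k₁]
      · obtain ⟨m, rfl⟩ := Nat.exists_eq_add_of_le h.le
        have := claim m
        linarith [hd0 (k₁ + m)]
    · push_neg at hcase
      refine ⟨max (Cs - c 0) 0, le_max_right _ _, fun n => ?_⟩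
      have h1 := clow n
      have h2 := (hcase n).le
      have h3 : Cs - c 0 ≤ max (Cs - c 0) 0 := le_max_left _ _
      linarith
  obtain ⟨T, hT0, hT⟩ := hPbdd
  -- conclude
  refine ⟨‖yb‖ + max 1 (d 0 + K * T) + (c 0 + (abar + 1) * T), fun k => ?_⟩
  have hdk : d k ≤ d 0 + K * T := by
    have h1 := hdK k
    have h2 : K * P k ≤ K * T := mul_le_mul_of_nonneg_left (hT k) hK0
    linarith
  have hyk : ‖y k - yb‖ ≤ max 1 (d 0 + K * T) := by
    rcases le_or_gt ‖y k - yb‖ 1 with h | h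
    · exact h.trans (le_max_left _ _)
    · have h2 : ‖y k - yb‖ ≤ ‖y k - yb‖ ^ 2 := by nlinarith
      refine (h2.trans ?_).trans (le_max_right _ _)
      simpa [hddef] using hdk
  have hynorm : ‖y k‖ ≤ ‖yb‖ + ‖y k - yb‖ := by
    have := norm_add_le yb (y k - yb)
    simpa using this
  have hck : |c k| ≤ c 0 + (abar + 1) * T := by
    rw [abs_of_nonneg (hck0 k)]
    have h1 := chigh k
    have h2 : (abar + 1) * P k ≤ (abar + 1) * T :=
      mul_le_mul_of_nonneg_left (hT k) (by linarith)
    linarith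
  linarith
end
end
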